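/- arXiv:2412.11738 — 8 statements merged into one kernel-verified Lean document; each statement's English description precedes it below -/
import Mathlib

section
/- Let f ∈ ℚ⟦x⟧ be a formal power series in one indeterminate that is algebraic over ℚ[x] (i.e., there exists a nonzero polynomial P(x,y) ∈ ℚ[x,y] with P(x,f)=0). Then there exists a positive integer a such that a·f(a·x) ∈ ℤ⟦x⟧. -/
open PowerSeries Polynomial

/-- `q` can be written with denominator `D^m`. -/
def DenB (D m : ℕ) (q : ℚ) : Prop := ∃ z : ℤ, (D:ℚ)^m * q = z

lemma DenB.zero {D m} : DenB D m 0 := ⟨0, by simp⟩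

lemma DenB.one {D m} : DenB D m 1 := ⟨(D:ℤ)^m, by push_cast; ring⟩

lemma DenB.add {D m q q'} (h : DenB D m q) (h' : DenB D m q') : DenB D m (q + q') := by
  obtain ⟨z, hz⟩ := h; obtain ⟨z', hz'⟩ := h'
  exact ⟨z + z', by push_cast; rw [mul_add, hz, hz']⟩

lemma DenB.neg {D m q} (h : DenB D m q) : DenB D m (-q) := by
  obtain ⟨z, hz⟩ := h; exact ⟨-z, by push_cast; rw [mul_neg, hz]⟩

lemma DenB.mul {D m m' q q'} (h : DenB D m q) (h' : DenB D m' q') :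
    DenB D (m + m') (q * q') := by
  obtain ⟨z, hz⟩ := h; obtain ⟨z', hz'⟩ := h'
  refine ⟨z * z', ?_⟩
  push_cast
  rw [pow_add, show (D:ℚ)^m * (D:ℚ)^m' * (q*q') = ((D:ℚ)^m * q) * ((D:ℚ)^m' * q') by ring,
    hz, hz']

lemma DenB.mono {D E m m' q} (hD : 0 < D) (hDE : D ∣ E) (hm : m ≤ m')
    (h : DenB D m q) : DenB E m' q := by
  obtain ⟨z, hz⟩ := h
  have hdvd : D^m ∣ E^m' := dvd_trans (pow_dvd_pow D hm) (pow_dvd_pow_of_dvd hDE m')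
  obtain ⟨k, hk⟩ := hdvd
  refine ⟨(k : ℤ) * z, ?_⟩
  have hE : ((E:ℚ))^m' = ((D:ℚ))^m * (k:ℚ) := by
    have : ((E^m' : ℕ) : ℚ) = ((D^m * k : ℕ) : ℚ) := by rw [hk]
    push_cast at this; linarith
  rw [hE]
  push_cast
  rw [mul_comm ((D:ℚ)^m) (k:ℚ), mul_assoc, hz]

lemma DenB.sum {D m : ℕ} {ι : Type*} (s : Finset ι) (h : ι → ℚ)
    (hs : ∀ i ∈ s, DenB D m (h i)) : DenB D m (∑ i ∈ s, h i) :=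
  Finset.sum_induction h (DenB D m) (fun _ _ ha hb => ha.add hb) DenB.zero hs

lemma DenB.of_den_dvd {D : ℕ} {q : ℚ} (h : (q.den : ℕ) ∣ D) : DenB D 1 q := by
  obtain ⟨k, hk⟩ := h
  refine ⟨(k:ℤ) * q.num, ?_⟩
  have hden : (q.den : ℚ) * q = (q.num : ℚ) := by
    rw [mul_comm]
    exact_mod_cast Rat.mul_den_eq_num q
  rw [pow_one, hk]
  push_cast
  rw [mul_comm (q.den:ℚ) (k:ℚ), mul_assoc, hden]

/-- Final wrapper: a graded denominator bound gives the conclusion. -/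
lemma final_wrapper (f : PowerSeries ℚ) (D lam mu : ℕ) (hD : 0 < D)
    (h : ∀ n, DenB D (lam*n + mu) (PowerSeries.coeff n f)) :
    ∃ a : ℕ, 0 < a ∧ ∃ g : PowerSeries ℤ,
      PowerSeries.map (Int.castRingHom ℚ) g = (a : ℚ) • PowerSeries.rescale (a : ℚ) f := by
  set M : ℕ := max lam mu + 1 with hM
  refine ⟨D ^ M, pow_pos hD _, ?_⟩
  have key : ∀ n, DenB D (M*(n+1)) (PowerSeries.coeff n f) := by
    intro n
    refine (h n).mono hD dvd_rfl ?_
    have h1 : lam ≤ M := by omega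
    have h2 : mu ≤ M := by omega
    nlinarith
  choose z hz using key
  refine ⟨PowerSeries.mk z, ?_⟩
  ext n
  simp only [PowerSeries.coeff_map, PowerSeries.coeff_mk, PowerSeries.coeff_smul,
    PowerSeries.coeff_rescale, smul_eq_mul]
  have : ((Int.castRingHom ℚ) (z n) : ℚ) = ((z n : ℤ) : ℚ) := rfl
  rw [this, ← hz n]
  push_cast
  rw [← pow_mul]
  ring

noncomputable def phi : Polynomial ℚ →+* PowerSeries ℚ :=
  (Polynomial.coeToPowerSeries.algHom ℚ).toRingHom

lemma phi_coeff (p : Polynomial ℚ) (n : ℕ) :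
    PowerSeries.coeff n (phi p) = p.coeff n := by
  simp [phi, Polynomial.coeToPowerSeries.algHom_apply]

lemma pow_coeff_denB {D lam mu : ℕ} (hD : 0 < D) (g : PowerSeries ℚ) (K : ℕ)
    (hg : ∀ k, k ≤ K → DenB D (lam*k + mu) (PowerSeries.coeff k g)) :
    ∀ j q, q ≤ K → DenB D (lam*q + j*mu) (PowerSeries.coeff q (g^j)) := by
  intro j
  induction j with
  | zero =>
    intro q _
    rw [pow_zero, PowerSeries.coeff_one]
    split
    · exact DenB.one
    · exact DenB.zero
  | succ j ih =>
    intro q hq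
    rw [pow_succ, PowerSeries.coeff_mul]
    apply DenB.sum
    intro p hp
    rw [Finset.HasAntidiagonal.mem_antidiagonal] at hp
    have h1 := ih p.1 (by omega)
    have h2 := hg p.2 (by omega)
    exact (h1.mul h2).mono hD dvd_rfl (le_of_eq (by rw [← hp]; ring))

lemma engine (g : PowerSeries ℚ) (c : ℚ) (hc : c ≠ 0) (Q : Polynomial (Polynomial ℚ))
    (dQ : ℕ) (hdeg : Q.natDegree < dQ)
    (hQ : ∀ j, 1 ≤ j → (Q.coeff j).coeff 0 = 0)
    (heq : c • g = Polynomial.eval g (Q.map phi)) :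
    ∃ D : ℕ, 0 < D ∧ ∀ n, DenB D (2*dQ*n + 2) (PowerSeries.coeff n g) := by
  classical
  set D : ℕ := c⁻¹.den * ∏ j ∈ Finset.range dQ,
      ∏ i ∈ Finset.range ((Q.coeff j).natDegree + 1), ((Q.coeff j).coeff i).den with hDdef
  have hD : 0 < D := by
    apply Nat.mul_pos c⁻¹.pos
    apply Finset.prod_pos
    intro j _
    apply Finset.prod_pos
    intro i _
    exact ((Q.coeff j).coeff i).pos
  have hDc : DenB D 1 c⁻¹ := DenB.of_den_dvd (Dvd.intro _ rfl)
  have hDQ : ∀ j i, DenB D 1 ((Q.coeff j).coeff i) := by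
    intro j i
    by_cases h0 : (Q.coeff j).coeff i = 0
    · rw [h0]; exact DenB.zero
    · apply DenB.of_den_dvd
      have hj : j < dQ := by
        have : j ≤ Q.natDegree := Polynomial.le_natDegree_of_ne_zero (fun h => h0 (by simp [h]))
        omega
      have hi : i < (Q.coeff j).natDegree + 1 :=
        Nat.lt_succ_of_le (Polynomial.le_natDegree_of_ne_zero h0)
      apply Dvd.dvd.mul_left
      exact dvd_trans
        (Finset.dvd_prod_of_mem (fun i => ((Q.coeff j).coeff i).den) (Finset.mem_range.mpr hi))
        (Finset.dvd_prod_of_mem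
          (fun j => ∏ i ∈ Finset.range ((Q.coeff j).natDegree + 1), ((Q.coeff j).coeff i).den)
          (Finset.mem_range.mpr hj))
  refine ⟨D, hD, ?_⟩
  intro n
  induction n using Nat.strong_induction_on with
  | _ n IH =>
  have hdeg' : (Q.map phi).natDegree < dQ := lt_of_le_of_lt Polynomial.natDegree_map_le hdeg
  have hcg : c * PowerSeries.coeff n g
      = ∑ j ∈ Finset.range dQ, ∑ p ∈ Finset.HasAntidiagonal.antidiagonal n,
          (Q.coeff j).coeff p.1 * PowerSeries.coeff p.2 (g^j) := by
    have h1 : PowerSeries.coeff n (c • g) = PowerSeries.coeff n (Polynomial.eval g (Q.map phi)) := by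
      rw [heq]
    rw [PowerSeries.coeff_smul, smul_eq_mul] at h1
    rw [h1, Polynomial.eval_eq_sum_range' hdeg', map_sum]
    apply Finset.sum_congr rfl
    intro j _
    rw [Polynomial.coeff_map, PowerSeries.coeff_mul]
    apply Finset.sum_congr rfl
    intro p _
    rw [phi_coeff]
  have claim : DenB D (2*dQ*n + 1) (c * PowerSeries.coeff n g) := by
    rw [hcg]
    apply DenB.sum
    intro j hj
    rw [Finset.mem_range] at hj
    apply DenB.sum
    intro p hp
    rw [Finset.HasAntidiagonal.mem_antidiagonal] at hp
    rcases Nat.eq_zero_or_pos j with hj0 | hj1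
    · subst hj0
      rw [pow_zero, PowerSeries.coeff_one]
      split
      · exact ((hDQ 0 p.1).mul (DenB.one (D := D) (m := 0))).mono hD dvd_rfl (by omega)
      · rw [mul_zero]; exact DenB.zero
    rcases Nat.eq_zero_or_pos p.1 with hp0 | hp1
    · rw [hp0, hQ j hj1, zero_mul]; exact DenB.zero
    · have hgk : ∀ k, k ≤ p.2 → DenB D (2*dQ*k + 2) (PowerSeries.coeff k g) := by
        intro k hk
        exact IH k (by omega)
      have h2 := pow_coeff_denB hD g p.2 hgk j p.2 le_rfl
      refine ((hDQ j p.1).mul h2).mono hD dvd_rfl ?_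
      have hb1 : 2*dQ*p.2 ≤ 2*dQ*(n-1) := by
        apply Nat.mul_le_mul_left
        omega
      have hb2 : 2*dQ*(n-1) + 2*dQ ≤ 2*dQ*n := by
        have : 2*dQ*(n-1) + 2*dQ = 2*dQ*(n-1+1) := by ring
        rw [this]
        apply Nat.mul_le_mul_left
        omega
      omega
  have : PowerSeries.coeff n g = c⁻¹ * (c * PowerSeries.coeff n g) := by
    field_simp
  rw [this]
  exact (hDc.mul claim).mono hD dvd_rfl (by omega)

lemma phi_eq (p : Polynomial ℚ) : phi p = (p : PowerSeries ℚ) := by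
  ext n
  rw [phi_coeff, Polynomial.coeff_coe]

lemma phi_injective : Function.Injective phi := by
  intro p q h
  ext n
  rw [← phi_coeff, ← phi_coeff, h]

lemma taylor_map {R S : Type*} [CommSemiring R] [CommSemiring S] (F : R →+* S)
    (r : R) (p : Polynomial R) :
    (Polynomial.taylor r p).map F = Polynomial.taylor (F r) (p.map F) := by
  simp [Polynomial.taylor_apply, Polynomial.map_comp, Polynomial.map_add]

lemma taylor_derivative {R : Type*} [CommSemiring R] (r : R) (p : Polynomial R) :
    Polynomial.derivative (Polynomial.taylor r p)
      = Polynomial.taylor r (Polynomial.derivative p) := by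
  rw [Polynomial.taylor_apply, Polynomial.taylor_apply, Polynomial.derivative_comp]
  simp

lemma eval_decomp {R : Type*} [CommSemiring R] (p : Polynomial R) (w : R) :
    p.eval w = p.coeff 0 + w * (p.divX.eval w) := by
  conv_lhs => rw [← Polynomial.X_mul_divX_add p]
  rw [Polynomial.eval_add, Polynomial.eval_mul, Polynomial.eval_X, Polynomial.eval_C]
  ring
/-- **Eisenstein's Theorem.** If `f ∈ ℚ⟦x⟧` is algebraic over `ℚ[x]`, then there is a
positive integer `a` such that `a·f(a·x)` has integer coefficients. -/
theorem eisenstein_thm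
    (f : PowerSeries ℚ)
    (halg : ∃ P : Polynomial (Polynomial ℚ), P ≠ 0 ∧
      Polynomial.eval f (P.map (Polynomial.coeToPowerSeries.algHom ℚ).toRingHom) = 0) :
    ∃ a : ℕ, 0 < a ∧ ∃ g : PowerSeries ℤ,
      PowerSeries.map (Int.castRingHom ℚ) g = (a : ℚ) • PowerSeries.rescale (a : ℚ) f := by
  classical
  have halg' : ∃ n : ℕ, ∃ P : Polynomial (Polynomial ℚ), P ≠ 0 ∧
      Polynomial.eval f (P.map phi) = 0 ∧ P.natDegree ≤ n := by
    obtain ⟨P, hP0, hPev⟩ := halg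
    exact ⟨P.natDegree, P, hP0, hPev, le_rfl⟩
  set n₀ := Nat.find halg' with hn₀
  obtain ⟨P, hP0, hPev, hPdeg⟩ := Nat.find_spec halg'
  have hmin : ∀ P' : Polynomial (Polynomial ℚ), P' ≠ 0 →
      Polynomial.eval f (P'.map phi) = 0 → n₀ ≤ P'.natDegree := by
    intro P' h0 hev
    by_contra hlt
    exact Nat.find_min halg' (by omega : P'.natDegree < n₀) ⟨P', h0, hev, le_rfl⟩
  -- degree at least 1
  have hdeg1 : 1 ≤ P.natDegree := by
    by_contra h
    have h0 : P.natDegree = 0 := by omega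
    obtain hPC := Polynomial.eq_C_of_natDegree_eq_zero h0
    rw [hPC] at hPev
    rw [Polynomial.map_C, Polynomial.eval_C] at hPev
    have : P.coeff 0 = 0 := phi_injective (by simpa using hPev)
    rw [this, map_zero] at hPC
    exact hP0 hPC
  -- derivative is nonzero at f
  set u : PowerSeries ℚ := Polynomial.eval f ((Polynomial.derivative P).map phi) with hu_def
  have hu : u ≠ 0 := by
    intro h
    have hd0 : Polynomial.derivative P ≠ 0 := by
      intro hd
      have := Polynomial.natDegree_eq_zero_of_derivative_eq_zero hd
      omega
    have h1 := hmin _ hd0 h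
    have h2 := Polynomial.natDegree_derivative_lt (p := P) (by omega)
    omega
  -- the order r of u
  have hex2 : ∃ k, PowerSeries.coeff k u ≠ 0 := by
    by_contra h
    push_neg at h
    exact hu (PowerSeries.ext fun k => by rw [h k, map_zero])
  set r := Nat.find hex2 with hr_def
  set c : ℚ := PowerSeries.coeff r u with hc_def
  have hc : c ≠ 0 := Nat.find_spec hex2
  have hlow : ∀ k < r, PowerSeries.coeff k u = 0 := by
    intro k hk
    by_contra h
    exact Nat.find_min hex2 hk h
  -- decomposition f = s + X^(r+1) * g
  set s' : Polynomial ℚ := PowerSeries.trunc (r+1) f with hs'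
  set g : PowerSeries ℚ := PowerSeries.mk (fun k => PowerSeries.coeff (k+(r+1)) f) with hg
  set w : PowerSeries ℚ := (PowerSeries.X)^(r+1) * g with hw
  have hfg : f = phi s' + w := by
    ext n
    rw [map_add, phi_coeff, hs', PowerSeries.coeff_trunc, hw,
      PowerSeries.coeff_X_pow_mul', hg]
    by_cases hn : n < r + 1
    · rw [if_pos hn, if_neg (by omega)]
      ring
    · rw [if_neg hn, if_pos (by omega)]
      simp only [PowerSeries.coeff_mk]
      rw [show n - (r+1) + (r+1) = n by omega]
      ring
  -- key evaluation lemma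
  have keyev : ∀ p : Polynomial (Polynomial ℚ),
      Polynomial.eval f (p.map phi) = Polynomial.eval w ((Polynomial.taylor s' p).map phi) := by
    intro p
    rw [taylor_map, Polynomial.taylor_eval,
      show w + phi s' = f from by rw [hfg]; ring]
  set Pt : Polynomial (PowerSeries ℚ) := (Polynomial.taylor s' P).map phi with hPt
  set A : ℕ → Polynomial ℚ := fun i => (Polynomial.taylor s' P).coeff i with hA
  have hPtco : ∀ i, Pt.coeff i = phi (A i) := by
    intro i
    rw [hPt, Polynomial.coeff_map]
  have h0 : Polynomial.eval w Pt = 0 := by rw [← keyev, hPev]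
  have hu' : u = Polynomial.eval w (Polynomial.derivative Pt) := by
    rw [hu_def, keyev, hPt, ← taylor_derivative, Polynomial.derivative_map]
  -- low coefficients of A 1
  have hwdvd : (PowerSeries.X : PowerSeries ℚ)^(r+1) ∣ w := ⟨g, rfl⟩
  have hA1u : ∀ k, k ≤ r → (A 1).coeff k = PowerSeries.coeff k u := by
    intro k hk
    have hd : u - phi (A 1) = w * Polynomial.eval w (Polynomial.derivative Pt).divX := by
      rw [hu', eval_decomp (Polynomial.derivative Pt) w]
      have : (Polynomial.derivative Pt).coeff 0 = phi (A 1) := by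
        rw [Polynomial.coeff_derivative, hPtco]
        push_cast
        ring
      rw [this]
      ring
    have hdvd : (PowerSeries.X : PowerSeries ℚ)^(r+1) ∣ u - phi (A 1) :=
      hd ▸ hwdvd.mul_right _
    have := (PowerSeries.X_pow_dvd_iff.mp hdvd) k (by omega)
    rw [map_sub, phi_coeff, sub_eq_zero] at this
    exact this.symm
  have hA1low : ∀ k < r, (A 1).coeff k = 0 := fun k hk => by
    rw [hA1u k (by omega), hlow k hk]
  have hA1r : (A 1).coeff r = c := hA1u r le_rfl
  -- X^r divides A 1
  have hA1dvd : (Polynomial.X : Polynomial ℚ)^r ∣ A 1 :=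
    Polynomial.X_pow_dvd_iff.mpr hA1low
  have hphiA1dvd : (PowerSeries.X : PowerSeries ℚ)^r ∣ phi (A 1) := by
    obtain ⟨B, hB⟩ := hA1dvd
    exact ⟨phi B, by rw [hB, map_mul, map_pow, phi_eq Polynomial.X, Polynomial.coe_X]⟩
  -- X^(2r+1) divides A 0
  have hA0dvd : (Polynomial.X : Polynomial ℚ)^(2*r+1) ∣ A 0 := by
    have hd : phi (A 0) = -(w * phi (A 1)) - w*w * Polynomial.eval w Pt.divX.divX := by
      have e1 := eval_decomp Pt w
      have e2 := eval_decomp Pt.divX w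
      rw [h0] at e1
      have hc1 : Pt.divX.coeff 0 = phi (A 1) := by rw [Polynomial.coeff_divX, hPtco]
      rw [e2, hc1, hPtco] at e1
      have : phi (A 0) = -(w * (phi (A 1) + w * Polynomial.eval w Pt.divX.divX)) := by
        linear_combination -e1
      rw [this]; ring
    have hdvd : (PowerSeries.X : PowerSeries ℚ)^(2*r+1) ∣ phi (A 0) := by
      rw [hd]
      apply dvd_sub
      · apply dvd_neg.mpr
        have : (PowerSeries.X : PowerSeries ℚ)^(2*r+1)
            = (PowerSeries.X)^(r+1) * (PowerSeries.X)^r := by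
          rw [← pow_add]; congr 1; omega
        rw [this]
        exact mul_dvd_mul hwdvd hphiA1dvd
      · have h22 : (PowerSeries.X : PowerSeries ℚ)^(2*r+1) ∣ w * w := by
          refine dvd_trans (pow_dvd_pow _ (by omega : 2*r+1 ≤ 2*r+2)) ?_
          rw [show 2*r+2 = (r+1)+(r+1) by omega, pow_add]
          exact mul_dvd_mul hwdvd hwdvd
        exact h22.mul_right _
    apply Polynomial.X_pow_dvd_iff.mpr
    intro k hk
    have := PowerSeries.X_pow_dvd_iff.mp hdvd k hk
    rwa [phi_coeff] at this
  obtain ⟨T, hT⟩ := hA0dvd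
  obtain ⟨B, hB⟩ := hA1dvd
  have hBc : B.coeff 0 = c := by
    have := Polynomial.coeff_X_pow_mul B r 0
    rw [← hB, zero_add, hA1r] at this
    exact this.symm
  have hXB : Polynomial.X ∣ B - Polynomial.C c := by
    apply Polynomial.X_dvd_iff.mpr
    simp [hBc]
  obtain ⟨B₁, hB₁⟩ := hXB
  have hBdec : B = Polynomial.C c + Polynomial.X * B₁ := by
    rw [← hB₁]; ring
  set d := P.natDegree with hd
  set eP : ℕ → ℕ := fun i => (r+1)*i - (2*r+1) with heP
  have heP_ge : ∀ i, 2 ≤ i → (2*r+1) + eP i = (r+1)*i := by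
    intro i hi
    have h2 : (r+1)*2 ≤ (r+1)*i := Nat.mul_le_mul_left _ hi
    simp only [heP]
    omega
  set N : Polynomial (Polynomial ℚ) :=
    Polynomial.C T + Polynomial.C (Polynomial.X * B₁) * Polynomial.X
      + ∑ i ∈ Finset.Ico 2 (d+1), Polynomial.C (A i * Polynomial.X^(eP i)) * Polynomial.X^i
    with hN
  have hPtdeg : Pt.natDegree < d + 1 := by
    apply Nat.lt_succ_of_le
    calc Pt.natDegree ≤ (Polynomial.taylor s' P).natDegree := Polynomial.natDegree_map_le
      _ = d := Polynomial.natDegree_taylor P s'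
  have hsum : (0 : PowerSeries ℚ) = ∑ i ∈ Finset.range (d+1), phi (A i) * w^i := by
    rw [← h0, Polynomial.eval_eq_sum_range' hPtdeg]
    apply Finset.sum_congr rfl
    intro i _
    rw [hPtco]
  have evalN : Polynomial.eval g (N.map phi)
      = phi T + phi (Polynomial.X * B₁) * g
        + ∑ i ∈ Finset.Ico 2 (d+1), phi (A i * Polynomial.X^(eP i)) * g^i := by
    simp only [hN, Polynomial.map_add, Polynomial.map_mul, Polynomial.map_C, Polynomial.map_pow,
      Polynomial.map_X, Polynomial.map_sum, Polynomial.eval_add, Polynomial.eval_mul,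
      Polynomial.eval_pow, Polynomial.eval_C, Polynomial.eval_X, Polynomial.eval_finset_sum]
  have t0 : (PowerSeries.X : PowerSeries ℚ)^(2*r+1) * phi T = phi (A 0) := by
    rw [hT]
    simp only [phi_eq, Polynomial.coe_mul, Polynomial.coe_pow, Polynomial.coe_X]
  have t1 : (PowerSeries.X : PowerSeries ℚ)^(2*r+1) * (phi (Polynomial.X*B₁) * g
      + PowerSeries.C c * g) = phi (A 1) * w := by
    rw [hB, hBdec, hw]
    simp only [phi_eq, Polynomial.coe_mul, Polynomial.coe_pow, Polynomial.coe_add,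
      Polynomial.coe_X, Polynomial.coe_C]
    ring
  have t2 : ∀ i ∈ Finset.Ico 2 (d+1), (PowerSeries.X : PowerSeries ℚ)^(2*r+1)
      * (phi (A i * Polynomial.X^(eP i)) * g^i) = phi (A i) * w^i := by
    intro i hi
    have hi2 : 2 ≤ i := (Finset.mem_Ico.mp hi).1
    rw [hw]
    simp only [phi_eq, Polynomial.coe_mul, Polynomial.coe_pow, Polynomial.coe_X]
    rw [mul_pow, ← pow_mul,
      show (r+1)*i = (2*r+1) + eP i from (heP_ge i hi2).symm, pow_add]
    ring
  have hkey : (PowerSeries.X : PowerSeries ℚ)^(2*r+1)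
      * (Polynomial.eval g (N.map phi) + PowerSeries.C c * g) = 0 := by
    calc (PowerSeries.X : PowerSeries ℚ)^(2*r+1)
        * (Polynomial.eval g (N.map phi) + PowerSeries.C c * g)
        = (PowerSeries.X : PowerSeries ℚ)^(2*r+1) * phi T
          + (PowerSeries.X : PowerSeries ℚ)^(2*r+1) * (phi (Polynomial.X*B₁) * g
              + PowerSeries.C c * g)
          + ∑ i ∈ Finset.Ico 2 (d+1), (PowerSeries.X : PowerSeries ℚ)^(2*r+1)
              * (phi (A i * Polynomial.X^(eP i)) * g^i) := by
          rw [evalN, ← Finset.mul_sum]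
          ring
      _ = phi (A 0) * w^0 + phi (A 1) * w^1 + ∑ i ∈ Finset.Ico 2 (d+1), phi (A i) * w^i := by
          rw [t0, t1, Finset.sum_congr rfl t2]
          ring
      _ = ∑ i ∈ Finset.range (d+1), phi (A i) * w^i := by
          rw [Finset.range_eq_Ico,
            ← Finset.sum_Ico_consecutive _ (Nat.zero_le 2) (by omega : 2 ≤ d+1)]
          congr 1
          rw [show Finset.Ico 0 2 = Finset.range 2 from by rw [Finset.range_eq_Ico],
            Finset.sum_range_succ, Finset.sum_range_one]
      _ = 0 := hsum.symm
  have hV : Polynomial.eval g (N.map phi) + PowerSeries.C c * g = 0 := by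
    rcases mul_eq_zero.mp hkey with h | h
    · exact absurd h (pow_ne_zero _ PowerSeries.X_ne_zero)
    · exact h
  set Q : Polynomial (Polynomial ℚ) := -N with hQdef
  have heq : c • g = Polynomial.eval g (Q.map phi) := by
    rw [hQdef, Polynomial.map_neg, Polynomial.eval_neg, PowerSeries.smul_eq_C_mul]
    linear_combination hV
  have hNcoeff : ∀ j, N.coeff j
      = (if j = 0 then T else 0) + (if j = 1 then Polynomial.X * B₁ else 0)
        + (if j ∈ Finset.Ico 2 (d+1) then A j * Polynomial.X^(eP j) else 0) := by
    intro j
    rw [hN]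
    rw [Polynomial.coeff_add, Polynomial.coeff_add, Polynomial.finset_sum_coeff]
    congr 1
    · congr 1
      · simp [Polynomial.coeff_C]
      · rw [Polynomial.coeff_C_mul, Polynomial.coeff_X]
        by_cases h : j = 1
        · subst h; simp
        · rw [if_neg (by omega), if_neg h, mul_zero]
    · rw [Finset.sum_congr rfl (fun i _ => by
        rw [Polynomial.coeff_C_mul, Polynomial.coeff_X_pow])]
      simp only [mul_ite, mul_one, mul_zero]
      rw [Finset.sum_ite_eq (Finset.Ico 2 (d+1)) j (fun i => A i * Polynomial.X^(eP i))]
  have hQ : ∀ j, 1 ≤ j → (Q.coeff j).coeff 0 = 0 := by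
    intro j hj
    rw [hQdef, Polynomial.coeff_neg, hNcoeff, if_neg (by omega)]
    rw [Polynomial.coeff_neg, Polynomial.coeff_add, Polynomial.coeff_add]
    have e1 : (if j = 1 then Polynomial.X * B₁ else 0).coeff 0 = 0 := by
      split
      · rw [Polynomial.mul_coeff_zero, Polynomial.coeff_X_zero, zero_mul]
      · simp
    have e2 : (if j ∈ Finset.Ico 2 (d+1) then A j * Polynomial.X^(eP j) else 0).coeff 0 = 0 := by
      split
      · rename_i hmem
        have hj2 : 2 ≤ j := (Finset.mem_Ico.mp hmem).1
        have : 1 ≤ eP j := by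
          have := heP_ge j hj2
          have h2 : (r+1)*2 ≤ (r+1)*j := Nat.mul_le_mul_left _ hj2
          omega
        rw [Polynomial.mul_coeff_zero, Polynomial.coeff_X_pow, if_neg (by omega), mul_zero]
      · simp
    rw [e1, e2, Polynomial.coeff_zero]
    ring
  obtain ⟨D, hD, hDg⟩ := engine g c hc Q (Q.natDegree + 1) (Nat.lt_succ_self _) hQ heq
  set dQ := Q.natDegree + 1 with hdQ
  set E : ℕ := D * ∏ k ∈ Finset.range (r+1), (PowerSeries.coeff k f).den with hE
  have hEpos : 0 < E := by
    apply Nat.mul_pos hD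
    apply Finset.prod_pos
    intro k _
    exact (PowerSeries.coeff k f).pos
  apply final_wrapper f E (2*dQ) 2 hEpos
  intro n
  by_cases hn : n ≤ r
  · refine (DenB.of_den_dvd (D := E) ?_).mono hEpos dvd_rfl
      (Nat.succ_le_succ (Nat.zero_le (2*dQ*n+1)))
    apply Dvd.dvd.mul_left
    exact Finset.dvd_prod_of_mem (fun k => (PowerSeries.coeff k f).den)
      (Finset.mem_range.mpr (by omega))
  · have hco : PowerSeries.coeff n f = PowerSeries.coeff (n - (r+1)) g := by
      rw [hg]
      simp only [PowerSeries.coeff_mk]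
      rw [show n - (r+1) + (r+1) = n from by omega]
    rw [hco]
    refine (hDg (n - (r+1))).mono hD ⟨_, hE⟩ ?_
    exact Nat.add_le_add_right (Nat.mul_le_mul_left _ (by omega : n-(r+1) ≤ n)) 2
end

section
/- Let f = Σ fₗ xˡ ∈ ℚ⟦x⟧ be algebraic over ℚ[x]. Then there exists a positive integer a such that for all ℓ ∈ ℕ, a^{ℓ+1}·fₗ ∈ ℤ. -/
open Polynomial PowerSeries Finset

def Rint : Subring ℚ := (Int.castRingHom ℚ).range

lemma natCast_mem_Rint (n : ℕ) : (n : ℚ) ∈ Rint := ⟨n, by simp⟩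

lemma natCast_pow_mem_Rint (n k : ℕ) : (n : ℚ) ^ k ∈ Rint := by
  rw [show ((n : ℚ)) ^ k = ((n ^ k : ℕ) : ℚ) by push_cast; ring]
  exact natCast_mem_Rint _

lemma den_dvd_mem_Rint {q : ℚ} {b : ℕ} (h : q.den ∣ b) : (b : ℚ) * q ∈ Rint := by
  obtain ⟨t, ht⟩ := h
  refine ⟨t * q.num, ?_⟩
  subst ht
  have hq := Rat.mul_den_eq_num q
  simp only [Int.coe_castRingHom]
  push_cast
  rw [mul_comm ((q.den : ℚ)) ((t : ℚ)), mul_assoc, mul_comm ((q.den : ℚ)) q, hq]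

/-- Clearing denominators of a single rational polynomial. -/
lemma denom_clear (p : Polynomial ℚ) :
    ∃ b : ℕ, 0 < b ∧ ∀ j, ((b : ℚ) * p.coeff j) ∈ Rint := by
  refine ⟨∏ j ∈ range (p.natDegree + 1), (p.coeff j).den,
    Finset.prod_pos (fun j _ => (p.coeff j).pos), ?_⟩
  intro j
  by_cases hj : j ≤ p.natDegree
  · exact den_dvd_mem_Rint
      (Finset.dvd_prod_of_mem (fun i => (p.coeff i).den) (by simp [Nat.lt_succ_iff, hj]))
  · rw [p.coeff_eq_zero_of_natDegree_lt (by omega), mul_zero]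
    exact ⟨0, by norm_num⟩

/-- Clearing denominators of finitely many rational polynomials. -/
lemma denom_clear_family (D : ℕ → Polynomial ℚ) (d : ℕ) :
    ∃ b : ℕ, 0 < b ∧ ∀ k ≤ d, ∀ j, ((b : ℚ) * (D k).coeff j) ∈ Rint := by
  induction d with
  | zero =>
    obtain ⟨b, hb, h⟩ := denom_clear (D 0)
    exact ⟨b, hb, fun k hk j => by rw [Nat.le_zero.mp hk]; exact h j⟩
  | succ d ih =>
    obtain ⟨b, hb, h⟩ := ih
    obtain ⟨b', hb', h'⟩ := denom_clear (D (d + 1))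
    refine ⟨b * b', Nat.mul_pos hb hb', fun k hk j => ?_⟩
    rcases Nat.lt_succ_iff_lt_or_eq.mp (Nat.lt_succ_of_le hk) with h1 | h1
    · push_cast
      rw [mul_comm (b : ℚ) (b' : ℚ), mul_assoc]
      exact Rint.mul_mem (natCast_mem_Rint b') (h k (by omega) j)
    · subst h1
      push_cast
      rw [mul_assoc]
      exact Rint.mul_mem (natCast_mem_Rint b) (h' j)

/-- If the first `n` coefficients of `g` are controlled by powers of `a`,
so are the coefficients of powers of `g`. -/
lemma pow_coeff_mem (a : ℕ) (g : PowerSeries ℚ) (n : ℕ)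
    (H : ∀ m, m < n → ((a : ℚ) ^ (m + 1) * PowerSeries.coeff m g) ∈ Rint) :
    ∀ k u, u + k ≤ n → ((a : ℚ) ^ (u + k) * PowerSeries.coeff u (g ^ k)) ∈ Rint := by
  intro k
  induction k with
  | zero =>
    intro u hu
    simp only [pow_zero, PowerSeries.coeff_one]
    split_ifs with h
    · subst h; simpa using ⟨1, by norm_num⟩
    · rw [mul_zero]; exact ⟨0, by norm_num⟩
  | succ k ih =>
    intro u hu
    rw [pow_succ', PowerSeries.coeff_mul, Finset.mul_sum]
    refine Subring.sum_mem _ (fun pq hpq => ?_)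
    obtain ⟨p, q⟩ := pq
    simp only [Finset.HasAntidiagonal.mem_antidiagonal] at hpq
    have key : (a : ℚ) ^ (u + (k + 1)) * (PowerSeries.coeff p g * PowerSeries.coeff q (g ^ k))
        = ((a : ℚ) ^ (p + 1) * PowerSeries.coeff p g) *
          ((a : ℚ) ^ (q + k) * PowerSeries.coeff q (g ^ k)) := by
      rw [← hpq]; ring
    rw [key]
    exact Rint.mul_mem (H p (by omega)) (ih q (by omega))

/-- **Eisenstein's Theorem, coefficient form.** If `f = Σ fₗ xˡ ∈ ℚ⟦x⟧` is algebraic over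
`ℚ[x]`, then there is a positive integer `a` such that `a^(ℓ+1)·fₗ ∈ ℤ` for all `ℓ`. -/
theorem eisenstein_thm_coeff
    (f : PowerSeries ℚ)
    (halg : ∃ P : Polynomial (Polynomial ℚ), P ≠ 0 ∧
      Polynomial.eval f (P.map (Polynomial.coeToPowerSeries.algHom ℚ).toRingHom) = 0) :
    ∃ a : ℕ, 0 < a ∧ ∀ ℓ : ℕ, ∃ m : ℤ,
      (a : ℚ) ^ (ℓ + 1) * PowerSeries.coeff ℓ f = (m : ℚ) := by
  classical
  have hφeq : (Polynomial.coeToPowerSeries.algHom ℚ).toRingHom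
      = Polynomial.coeToPowerSeries.ringHom := by
    refine RingHom.ext fun p => ?_
    ext n
    simp [Polynomial.coeToPowerSeries.algHom_apply, PowerSeries.coeff_map, Polynomial.coeff_coe]
  rw [hφeq] at halg
  set φ : Polynomial ℚ →+* PowerSeries ℚ := Polynomial.coeToPowerSeries.ringHom with hφdef
  have hφapp : ∀ p : Polynomial ℚ, φ p = (p : PowerSeries ℚ) := fun p => rfl
  have hφinj : Function.Injective φ := fun p q hpq => by
    rwa [hφapp, hφapp, Polynomial.coe_inj] at hpq
  obtain ⟨P0, hP0ne, hP0f⟩ := halg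
  -- minimal degree annihilator
  have hex : ∃ n, ∃ P : Polynomial (Polynomial ℚ), P ≠ 0 ∧
      Polynomial.eval f (P.map φ) = 0 ∧ P.natDegree ≤ n :=
    ⟨P0.natDegree, P0, hP0ne, hP0f, le_rfl⟩
  set d := Nat.find hex with hddef
  obtain ⟨P, hPne, hPf, hPd⟩ := Nat.find_spec hex
  rw [← hddef] at hPd
  have hd0 : d ≠ 0 := by
    intro hd
    rw [hd] at hPd
    have hP : P = Polynomial.C (P.coeff 0) :=
      Polynomial.eq_C_of_natDegree_eq_zero (Nat.le_zero.mp hPd)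
    rw [hP, Polynomial.map_C, Polynomial.eval_C] at hPf
    have : P.coeff 0 = 0 := hφinj (by rw [hPf, map_zero])
    exact hPne (by rw [hP, this, map_zero])
  have hPdeg : P.natDegree = d := by
    refine le_antisymm hPd ?_
    by_contra hlt
    exact Nat.find_min hex (by omega : P.natDegree < d) ⟨P, hPne, hPf, le_rfl⟩
  -- nonzero derivative
  set P' := Polynomial.derivative P with hP'def
  have hP'ne : P' ≠ 0 := by
    intro h0
    have hlc : P.coeff d ≠ 0 := by
      rw [← hPdeg]
      exact Polynomial.leadingCoeff_ne_zero.mpr hPne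
    have : P'.coeff (d - 1) ≠ 0 := by
      rw [hP'def, Polynomial.coeff_derivative, show (d - 1) + 1 = d by omega]
      exact mul_ne_zero hlc (Nat.cast_add_one_ne_zero (d - 1))
    exact this (by rw [h0]; simp)
  set u := Polynomial.eval f (P'.map φ) with hudef
  have hune : u ≠ 0 := by
    intro h0
    have hle : P'.natDegree ≤ d - 1 := le_trans (Polynomial.natDegree_derivative_le P)
      (by rw [hPdeg])
    exact Nat.find_min hex (by omega : d - 1 < d) ⟨P', hP'ne, h0, hle⟩
  -- order h of u
  have hexc : ∃ j, PowerSeries.coeff j u ≠ 0 := by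
    by_contra hall
    push_neg at hall
    exact hune (PowerSeries.ext fun j => by rw [hall j, map_zero])
  set h := Nat.find hexc with hhdef
  have hch : PowerSeries.coeff h u ≠ 0 := Nat.find_spec hexc
  have hmin : ∀ j < h, PowerSeries.coeff j u = 0 := fun j hj => by
    have := Nat.find_min hexc hj; push_neg at this; exact this
  -- truncation and tail
  set N := h + 2 with hNdef
  set s := PowerSeries.trunc N f with hsdef
  have hXN : (PowerSeries.X : PowerSeries ℚ) ^ N ∣ f - (s : PowerSeries ℚ) := by
    rw [PowerSeries.X_pow_dvd_iff]
    intro m hm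
    rw [map_sub, Polynomial.coeff_coe, hsdef, PowerSeries.coeff_trunc, if_pos hm, sub_self]
  obtain ⟨g, hg⟩ := hXN
  have hXN : (PowerSeries.X : PowerSeries ℚ) ^ N ∣ f - (s : PowerSeries ℚ) := ⟨g, hg⟩
  have hfg : f = (s : PowerSeries ℚ) + PowerSeries.X ^ N * g := by
    rw [← hg]; ring
  -- Taylor coefficients
  set D : ℕ → Polynomial ℚ := fun k => ((Polynomial.taylor s) P).coeff k with hDdef
  have htay : (Polynomial.taylor ((s : PowerSeries ℚ))) (P.map φ)
      = ((Polynomial.taylor s) P).map φ := by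
    rw [Polynomial.taylor_apply, Polynomial.taylor_apply, Polynomial.map_comp]
    simp [Polynomial.map_add, hφapp]
  have hdeg' : ((Polynomial.taylor ((s : PowerSeries ℚ))) (P.map φ)).natDegree < d + 1 := by
    rw [Polynomial.natDegree_taylor]
    exact Nat.lt_succ_of_le (le_trans Polynomial.natDegree_map_le (le_of_eq hPdeg))
  have hEq : ∑ k ∈ range (d + 1),
      ((D k : PowerSeries ℚ)) * (PowerSeries.X : PowerSeries ℚ) ^ (N * k) * g ^ k = 0 := by
    have e1 : Polynomial.eval (PowerSeries.X ^ N * g)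
        ((Polynomial.taylor ((s : PowerSeries ℚ))) (P.map φ)) = 0 := by
      rw [Polynomial.taylor_eval, add_comm, ← hfg, hPf]
    rw [Polynomial.eval_eq_sum_range' hdeg'] at e1
    rw [← e1]
    refine Finset.sum_congr rfl (fun k hk => ?_)
    rw [htay, Polynomial.coeff_map, hφapp, mul_pow, ← pow_mul, mul_assoc]
  -- order facts for D 1
  have hD1 : ((D 1 : Polynomial ℚ) : PowerSeries ℚ)
      = Polynomial.eval ((s : PowerSeries ℚ)) (P'.map φ) := by
    simp only [hDdef]
    rw [Polynomial.taylor_coeff_one, ← hφapp, ← Polynomial.eval₂_at_apply, ← Polynomial.eval_map,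
      hφapp]
  have hdvd1 : (PowerSeries.X : PowerSeries ℚ) ^ N ∣ u - ((D 1 : Polynomial ℚ) : PowerSeries ℚ) := by
    rw [hD1, hudef]
    exact dvd_trans hXN (Polynomial.sub_dvd_eval_sub f ((s : PowerSeries ℚ)) (P'.map φ))
  have hcoeffD1 : ∀ j, j < N →
      PowerSeries.coeff j ((D 1 : Polynomial ℚ) : PowerSeries ℚ) = PowerSeries.coeff j u := by
    intro j hj
    have h2 := (PowerSeries.X_pow_dvd_iff.mp hdvd1) j hj
    rw [map_sub, sub_eq_zero] at h2
    exact h2.symm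
  set c := PowerSeries.coeff h u with hcdef
  have hcne : c ≠ 0 := hch
  have hD1j : ∀ j, j < h → (D 1).coeff j = 0 := fun j hj => by
    rw [← Polynomial.coeff_coe, hcoeffD1 j (by omega), hmin j hj]
  have hD1h : (D 1).coeff h = c := by
    rw [← Polynomial.coeff_coe, hcoeffD1 h (by omega)]
  -- denominators
  set E : ℕ → Polynomial ℚ := fun k => if k = d + 1 then s else Polynomial.C c⁻¹ * D k with hEdef
  obtain ⟨a, hapos, haE⟩ := denom_clear_family E (d + 1)
  have haD : ∀ k, k ≤ d → ∀ j, ((a : ℚ) * (c⁻¹ * (D k).coeff j)) ∈ Rint := by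
    intro k hk j
    have h3 := haE k (by omega) j
    simp only [hEdef, if_neg (by omega : ¬ k = d + 1)] at h3
    rwa [Polynomial.coeff_C_mul] at h3
  have has : ∀ j, ((a : ℚ) * s.coeff j) ∈ Rint := by
    intro j
    have h3 := haE (d + 1) le_rfl j
    simpa only [hEdef, if_pos rfl] using h3
  -- main induction: the tail g has controlled denominators
  have Hg : ∀ n : ℕ, ((a : ℚ) ^ (n + 1) * PowerSeries.coeff n g) ∈ Rint := by
    intro n
    induction n using Nat.strong_induction_on with
    | _ n IH =>
    have h0 : ∑ k ∈ range (d + 1), ∑ pq ∈ Finset.HasAntidiagonal.antidiagonal (n + N + h),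
        PowerSeries.coeff pq.1 ((D k : PowerSeries ℚ) * PowerSeries.X ^ (N * k))
          * PowerSeries.coeff pq.2 (g ^ k) = 0 := by
      have h1 := congrArg (PowerSeries.coeff (n + N + h)) hEq
      rw [map_sum, map_zero] at h1
      calc ∑ k ∈ range (d + 1), ∑ pq ∈ Finset.HasAntidiagonal.antidiagonal (n + N + h),
            PowerSeries.coeff pq.1 ((D k : PowerSeries ℚ) * PowerSeries.X ^ (N * k))
              * PowerSeries.coeff pq.2 (g ^ k)
          = ∑ k ∈ range (d + 1), PowerSeries.coeff (n + N + h)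
              ((D k : PowerSeries ℚ) * PowerSeries.X ^ (N * k) * g ^ k) :=
            Finset.sum_congr rfl fun k _ => (PowerSeries.coeff_mul _ _ _).symm
        _ = 0 := h1
    -- each non-special term is integral after scaling
    have key : ∀ k, k ≤ d → ∀ pq : ℕ × ℕ, pq.1 + pq.2 = n + N + h →
        (k ≠ 1 ∨ pq ≠ (N + h, n)) →
        (c⁻¹ * (a : ℚ) ^ (n + 1) *
          (PowerSeries.coeff pq.1 ((D k : PowerSeries ℚ) * PowerSeries.X ^ (N * k))
            * PowerSeries.coeff pq.2 (g ^ k))) ∈ Rint := by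
      rintro k hk ⟨p, q⟩ hpq hne
      simp only [Finset.HasAntidiagonal.mem_antidiagonal] at hpq
      rw [PowerSeries.coeff_mul_X_pow']
      by_cases hNk : N * k ≤ p
      swap
      · rw [if_neg hNk, zero_mul, mul_zero]; exact Rint.zero_mem
      rw [if_pos hNk, Polynomial.coeff_coe]
      have general : q + k ≤ n →
          (c⁻¹ * (a : ℚ) ^ (n + 1) *
            ((D k).coeff (p - N * k) * PowerSeries.coeff q (g ^ k))) ∈ Rint := by
        intro hqk
        have e : c⁻¹ * (a : ℚ) ^ (n + 1) *
              ((D k).coeff (p - N * k) * PowerSeries.coeff q (g ^ k))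
            = ((a : ℚ) * (c⁻¹ * (D k).coeff (p - N * k))) *
              ((a : ℚ) ^ (n - (q + k)) *
                ((a : ℚ) ^ (q + k) * PowerSeries.coeff q (g ^ k))) := by
          rw [show n + 1 = 1 + ((n - (q + k)) + (q + k)) by omega, pow_add, pow_add, pow_one]
          ring
        rw [e]
        exact Rint.mul_mem (haD k hk _)
          (Rint.mul_mem (natCast_pow_mem_Rint a _) (pow_coeff_mem a g n IH k q hqk))
      rcases Nat.lt_or_ge k 2 with hk2 | hk2
      · interval_cases k
        · by_cases hq : q = 0
          · exact general (by omega)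
          · rw [pow_zero, PowerSeries.coeff_one, if_neg hq, mul_zero, mul_zero]
            exact Rint.zero_mem
        · rcases lt_trichotomy p (N + h) with hp | hp | hp
          · rw [hD1j (p - N * 1) (by omega), zero_mul, mul_zero]
            exact Rint.zero_mem
          · exfalso
            rcases hne with h' | h'
            · exact h' rfl
            · exact h' (by rw [Prod.mk.injEq]; omega)
          · exact general (by omega)
      · refine general ?_
        have hN2 : N = h + 2 := hNdef
        have hNk' : N + h + k ≤ N * k := by nlinarith
        omega
    -- assemble
    have h1mem : (1 : ℕ) ∈ range (d + 1) := by
      rw [Finset.mem_range]; omega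
    have hsp : ((N + h, n) : ℕ × ℕ) ∈ Finset.HasAntidiagonal.antidiagonal (n + N + h) := by
      rw [Finset.HasAntidiagonal.mem_antidiagonal]; omega
    set τ : ℕ → ℕ × ℕ → ℚ := fun k pq =>
      PowerSeries.coeff pq.1 ((D k : PowerSeries ℚ) * PowerSeries.X ^ (N * k))
        * PowerSeries.coeff pq.2 (g ^ k) with hτdef
    set T : ℕ → ℚ := fun k => ∑ pq ∈ Finset.HasAntidiagonal.antidiagonal (n + N + h), τ k pq with hTdef
    have hsplit1 : T 1 + ∑ k ∈ (range (d + 1)).erase 1, T k = 0 := by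
      rw [Finset.add_sum_erase _ T h1mem]
      exact h0
    have hspec : τ 1 (N + h, n) = c * PowerSeries.coeff n g := by
      simp only [hτdef]
      rw [PowerSeries.coeff_mul_X_pow', if_pos (by omega : N * 1 ≤ N + h), Polynomial.coeff_coe,
        show N + h - N * 1 = h by omega, hD1h, pow_one]
    have hT1 : T 1 = c * PowerSeries.coeff n g
        + ∑ pq ∈ (Finset.HasAntidiagonal.antidiagonal (n + N + h)).erase (N + h, n), τ 1 pq := by
      rw [hTdef]
      simp only
      rw [← Finset.add_sum_erase _ (τ 1) hsp, hspec]
    have hAmem : (c⁻¹ * (a : ℚ) ^ (n + 1) *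
        ∑ pq ∈ (Finset.HasAntidiagonal.antidiagonal (n + N + h)).erase (N + h, n), τ 1 pq) ∈ Rint := by
      rw [Finset.mul_sum]
      refine Subring.sum_mem _ fun pq hpq => ?_
      rw [Finset.mem_erase, Finset.HasAntidiagonal.mem_antidiagonal] at hpq
      exact key 1 (by omega) pq hpq.2 (Or.inr hpq.1)
    have hBmem : (c⁻¹ * (a : ℚ) ^ (n + 1) * ∑ k ∈ (range (d + 1)).erase 1, T k) ∈ Rint := by
      rw [Finset.mul_sum]
      refine Subring.sum_mem _ fun k hk => ?_
      rw [Finset.mem_erase, Finset.mem_range] at hk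
      rw [hTdef]
      simp only
      rw [Finset.mul_sum]
      refine Subring.sum_mem _ fun pq hpq => ?_
      rw [Finset.HasAntidiagonal.mem_antidiagonal] at hpq
      exact key k (by omega) pq hpq (Or.inl hk.1)
    have hgid : (a : ℚ) ^ (n + 1) * PowerSeries.coeff n g
        = -(c⁻¹ * (a : ℚ) ^ (n + 1) *
            ∑ pq ∈ (Finset.HasAntidiagonal.antidiagonal (n + N + h)).erase (N + h, n), τ 1 pq)
          - c⁻¹ * (a : ℚ) ^ (n + 1) * ∑ k ∈ (range (d + 1)).erase 1, T k := by
      have hc' : c * PowerSeries.coeff n g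
          = - ∑ pq ∈ (Finset.HasAntidiagonal.antidiagonal (n + N + h)).erase (N + h, n), τ 1 pq
            - ∑ k ∈ (range (d + 1)).erase 1, T k := by
        rw [hT1] at hsplit1
        linarith
      have e2 : (a : ℚ) ^ (n + 1) * PowerSeries.coeff n g
          = c⁻¹ * (a : ℚ) ^ (n + 1) * (c * PowerSeries.coeff n g) := by
        field_simp
      rw [e2, hc']
      ring
    rw [hgid]
    exact Rint.sub_mem (Rint.neg_mem hAmem) hBmem
  -- conclusion
  refine ⟨a, hapos, fun ℓ => ?_⟩
  by_cases hℓ : ℓ < N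
  · have hcf : s.coeff ℓ = PowerSeries.coeff ℓ f := by
      rw [hsdef, PowerSeries.coeff_trunc, if_pos hℓ]
    have hmem : ((a : ℚ) ^ (ℓ + 1) * PowerSeries.coeff ℓ f) ∈ Rint := by
      rw [← hcf, pow_succ, mul_assoc]
      exact Rint.mul_mem (natCast_pow_mem_Rint a ℓ) (has ℓ)
    obtain ⟨m, hm⟩ := hmem
    exact ⟨m, hm.symm⟩
  · push_neg at hℓ
    have hcf : PowerSeries.coeff ℓ f = PowerSeries.coeff (ℓ - N) g := by
      rw [hfg, map_add, Polynomial.coeff_coe, hsdef, PowerSeries.coeff_trunc,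
        if_neg (by omega), zero_add, mul_comm, PowerSeries.coeff_mul_X_pow', if_pos hℓ]
    have hmem : ((a : ℚ) ^ (ℓ + 1) * PowerSeries.coeff ℓ f) ∈ Rint := by
      rw [hcf, show ℓ + 1 = N + (ℓ - N + 1) by omega, pow_add, mul_assoc]
      exact Rint.mul_mem (natCast_pow_mem_Rint a N) (Hg (ℓ - N))
    obtain ⟨m, hm⟩ := hmem
    exact ⟨m, hm.symm⟩
end

section
/- If f ∈ ℚ⟦x⟧ is D-finite, then the sequence of its coefficients (fₗ) is P-recursive: there exist polynomials p₀,…,p_e ∈ ℤ[t], with p_e nonzero, such that p₀(ℓ)fₗ + p₁(ℓ)f_{ℓ+1} + ⋯ + p_e(ℓ)f_{ℓ+e} = 0 for all ℓ ∈ ℕ. -/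
open Polynomial PowerSeries Finset

private lemma coeff_deriv_iter (f : PowerSeries ℚ) (i : ℕ) : ∀ m : ℕ,
    PowerSeries.coeff m ((PowerSeries.derivativeFun)^[i] f) =
      (∏ s ∈ Finset.range i, ((m : ℚ) + s + 1)) * PowerSeries.coeff (m + i) f := by
  induction i with
  | zero => simp
  | succ i ih =>
    intro m
    rw [Function.iterate_succ_apply', show ∀ g : PowerSeries ℚ, g.derivativeFun = PowerSeries.derivative ℚ g from fun _ => rfl,
      PowerSeries.coeff_derivative, ih (m + 1),
      Finset.prod_range_succ', show m + 1 + i = m + (i + 1) by omega]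
    have : ∏ s ∈ Finset.range i, (((m + 1 : ℕ) : ℚ) + s + 1)
        = ∏ s ∈ Finset.range i, ((m : ℚ) + ((s + 1 : ℕ) : ℚ) + 1) := by
      refine Finset.prod_congr rfl fun s _ => by push_cast; ring
    rw [this]
    push_cast
    ring

private noncomputable def qpoly (D : ℕ) (d : ℕ) (a : ℕ → Polynomial ℚ) (k : ℕ) :
    Polynomial ℚ :=
  ∑ i ∈ Finset.range (d + 1), if i ≤ k ∧ k ≤ D + i then
    Polynomial.C ((a i).coeff (D + i - k)) *
      ∏ s ∈ Finset.range i, (Polynomial.X + Polynomial.C ((k : ℚ) - i + s + 1))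
  else 0

private lemma qpoly_eval (D d : ℕ) (a : ℕ → Polynomial ℚ) (k : ℕ) (x : ℚ) :
    (qpoly D d a k).eval x = ∑ i ∈ Finset.range (d + 1), if i ≤ k ∧ k ≤ D + i then
      (a i).coeff (D + i - k) * ∏ s ∈ Finset.range i, (x + ((k : ℚ) - i + s + 1))
    else 0 := by
  rw [qpoly, Polynomial.eval_finset_sum]
  refine Finset.sum_congr rfl fun i _ => ?_
  split
  · rw [Polynomial.eval_mul, Polynomial.eval_C, Polynomial.eval_prod]
    congr 1
    exact Finset.prod_congr rfl fun s _ => by simp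
  · simp

private lemma qpoly_rec (D d : ℕ) (a : ℕ → Polynomial ℚ) (f : PowerSeries ℚ)
    (hD : ∀ i ∈ Finset.range (d + 1), (a i).natDegree ≤ D)
    (hcoeff : ∀ n : ℕ, ∑ i ∈ Finset.range (d + 1), ∑ j ∈ Finset.range (n + 1),
      (a i).coeff j * ((∏ s ∈ Finset.range i, (((n - j : ℕ) : ℚ) + s + 1))
        * PowerSeries.coeff (n - j + i) f) = 0) (ℓ : ℕ) :
    ∑ k ∈ Finset.range (d + D + 1),
      (qpoly D d a k).eval (ℓ : ℚ) * PowerSeries.coeff (ℓ + k) f = 0 := by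
  -- shrink the inner sum of hcoeff at n = ℓ + D to range (D+1)
  have h2 : ∑ i ∈ Finset.range (d + 1), ∑ j ∈ Finset.range (D + 1),
      (a i).coeff j * ((∏ s ∈ Finset.range i, (((ℓ + D - j : ℕ) : ℚ) + s + 1))
        * PowerSeries.coeff (ℓ + D - j + i) f) = 0 := by
    rw [← hcoeff (ℓ + D)]
    refine Finset.sum_congr rfl fun i hi => ?_
    refine (Finset.sum_subset (Finset.range_subset_range.2 (by omega)) fun j hj hj' => ?_)
    have : (a i).coeff j = 0 := Polynomial.coeff_eq_zero_of_natDegree_lt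
      (lt_of_le_of_lt (hD i hi) (by simp at hj'; omega))
    rw [this, zero_mul]
  rw [← h2]
  have step : ∀ k, (qpoly D d a k).eval (ℓ : ℚ) * PowerSeries.coeff (ℓ + k) f
      = ∑ i ∈ Finset.range (d + 1), if i ≤ k ∧ k ≤ D + i then
          (a i).coeff (D + i - k) * (∏ s ∈ Finset.range i, ((ℓ : ℚ) + ((k : ℚ) - i + s + 1)))
            * PowerSeries.coeff (ℓ + k) f
        else 0 := by
    intro k
    rw [qpoly_eval, Finset.sum_mul]
    refine Finset.sum_congr rfl fun i _ => ?_
    split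
    · ring
    · rw [zero_mul]
  calc ∑ k ∈ Finset.range (d + D + 1),
        (qpoly D d a k).eval (ℓ : ℚ) * PowerSeries.coeff (ℓ + k) f
      = ∑ k ∈ Finset.range (d + D + 1), ∑ i ∈ Finset.range (d + 1),
          if i ≤ k ∧ k ≤ D + i then
            (a i).coeff (D + i - k) * (∏ s ∈ Finset.range i, ((ℓ : ℚ) + ((k : ℚ) - i + s + 1)))
              * PowerSeries.coeff (ℓ + k) f
          else 0 := Finset.sum_congr rfl fun k _ => step k
    _ = ∑ i ∈ Finset.range (d + 1), ∑ k ∈ Finset.range (d + D + 1),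
          if i ≤ k ∧ k ≤ D + i then
            (a i).coeff (D + i - k) * (∏ s ∈ Finset.range i, ((ℓ : ℚ) + ((k : ℚ) - i + s + 1)))
              * PowerSeries.coeff (ℓ + k) f
          else 0 := Finset.sum_comm
    _ = ∑ i ∈ Finset.range (d + 1), ∑ j ∈ Finset.range (D + 1),
          (a i).coeff j * ((∏ s ∈ Finset.range i, (((ℓ + D - j : ℕ) : ℚ) + s + 1))
            * PowerSeries.coeff (ℓ + D - j + i) f) := by
        refine Finset.sum_congr rfl fun i hi => ?_
        have hid : i ≤ d := by simp at hi; omega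
        rw [← Finset.sum_filter]
        have hfe : (Finset.range (d + D + 1)).filter (fun k => i ≤ k ∧ k ≤ D + i)
            = Finset.Icc i (D + i) := by
          ext k
          simp only [Finset.mem_filter, Finset.mem_range, Finset.mem_Icc]
          omega
        rw [hfe]
        refine Finset.sum_nbij' (i := fun k => D + i - k) (j := fun j => D + i - j)
          ?_ ?_ ?_ ?_ ?_
        · intro k hk; simp only [Finset.mem_Icc] at hk; simp; omega
        · intro j hj; simp only [Finset.mem_range] at hj; simp [Finset.mem_Icc]; omega
        · intro k hk; simp only [Finset.mem_Icc] at hk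
          show D + i - (D + i - k) = k; omega
        · intro j hj; simp only [Finset.mem_range] at hj
          show D + i - (D + i - j) = j; omega
        · intro k hk
          simp only [Finset.mem_Icc] at hk
          obtain ⟨h1, h2⟩ := hk
          have hidx : ℓ + D - (D + i - k) + i = ℓ + k := by omega
          have hcast : ((ℓ + D - (D + i - k) : ℕ) : ℚ) = (ℓ : ℚ) + (k : ℚ) - (i : ℚ) := by
            rw [show ℓ + D - (D + i - k) = ℓ + (k - i) by omega, Nat.cast_add, Nat.cast_sub h1]
            ring
          have hprod : ∏ s ∈ Finset.range i, (((ℓ + D - (D + i - k) : ℕ) : ℚ) + s + 1)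
              = ∏ s ∈ Finset.range i, ((ℓ : ℚ) + ((k : ℚ) - i + s + 1)) :=
            Finset.prod_congr rfl fun s _ => by rw [hcast]; ring
          rw [hidx, hprod]
          ring

private lemma qpoly_ne_zero (D d : ℕ) (a : ℕ → Polynomial ℚ) (i0 : ℕ) (hi0d : i0 ≤ d)
    (hi0 : a i0 ≠ 0) (hmax : ∀ i, i0 < i → i ≤ d → a i = 0)
    (hj0D : (a i0).natTrailingDegree ≤ D) :
    qpoly D d a (D + i0 - (a i0).natTrailingDegree) ≠ 0 := by
  set j0 := (a i0).natTrailingDegree with hj0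
  set k := D + i0 - j0 with hk
  have hcoeff : (qpoly D d a k).coeff i0 = (a i0).coeff j0 := by
    rw [qpoly, Polynomial.finset_sum_coeff]
    rw [Finset.sum_eq_single i0]
    · have hcond : i0 ≤ k ∧ k ≤ D + i0 := by omega
      rw [if_pos hcond]
      have hM : (∏ s ∈ Finset.range i0, (Polynomial.X + Polynomial.C ((k : ℚ) - i0 + s + 1))).Monic :=
        monic_prod_of_monic _ _ fun s _ => monic_X_add_C _
      have hMdeg : (∏ s ∈ Finset.range i0, (Polynomial.X + Polynomial.C ((k : ℚ) - i0 + s + 1))).natDegree = i0 := by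
        rw [Polynomial.natDegree_prod _ _ fun s _ => X_add_C_ne_zero _]
        simp only [Polynomial.natDegree_X_add_C, Finset.sum_const, smul_eq_mul, mul_one,
          Finset.card_range]
      have hone := hM.coeff_natDegree
      rw [hMdeg] at hone
      rw [Polynomial.coeff_C_mul, show D + i0 - k = j0 by omega, hone, mul_one]
    · intro i hi hne
      rcases lt_or_gt_of_ne hne with hlt | hgt
      · -- i < i0 : degree too small
        split
        · refine Polynomial.coeff_eq_zero_of_natDegree_lt ?_
          refine lt_of_le_of_lt ((Polynomial.natDegree_C_mul_le _ _).trans ?_) hlt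
          refine (Polynomial.natDegree_prod_le _ _).trans ?_
          simp only [Polynomial.natDegree_X_add_C, Finset.sum_const, smul_eq_mul, mul_one,
            Finset.card_range, le_refl]
        · simp
      · -- i > i0 : a i = 0
        have : a i = 0 := hmax i hgt (by simp at hi; omega)
        split <;> simp [this]
    · intro h
      exact absurd (Finset.mem_range.2 (by omega)) h
  intro hq
  rw [hq, Polynomial.coeff_zero] at hcoeff
  exact (Polynomial.coeff_natTrailingDegree_ne_zero.2 hi0) hcoeff.symm


private lemma zsmul_eq_C_mul (b : ℤ) (q : Polynomial ℚ) :
    b • q = Polynomial.C ((b : ℚ)) * q := by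
  ext n
  simp [Polynomial.coeff_smul, Polynomial.coeff_C_mul, zsmul_eq_mul]

/-- **D-finite implies P-recursive.** If `f ∈ ℚ⟦x⟧` is D-finite, then its coefficient
sequence satisfies a recurrence `p₀(ℓ)fₗ + p₁(ℓ)f_{ℓ+1} + ⋯ + p_e(ℓ)f_{ℓ+e} = 0` for all
`ℓ ∈ ℕ`, with `p₀,…,p_e ∈ ℤ[t]` and `p_e ≠ 0`. -/
theorem dfinite_implies_precursive
    (f : PowerSeries ℚ)
    (hDfin : ∃ d : ℕ, ∃ a : ℕ → Polynomial ℚ, (∃ i ≤ d, a i ≠ 0) ∧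
      ∑ i ∈ Finset.range (d + 1),
        (Polynomial.coeToPowerSeries.algHom ℚ (a i)) * (PowerSeries.derivativeFun)^[i] f = 0) :
    ∃ e : ℕ, ∃ p : ℕ → Polynomial ℤ, p e ≠ 0 ∧ ∀ ℓ : ℕ,
      ∑ i ∈ Finset.range (e + 1),
        (((p i).eval (ℓ : ℤ) : ℤ) : ℚ) * PowerSeries.coeff (ℓ + i) f = 0 := by
  classical
  obtain ⟨d, a, ⟨i1, hi1d, hai1⟩, heq⟩ := hDfin
  set D := (Finset.range (d + 1)).sup (fun i => (a i).natDegree) with hDdef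
  have hD : ∀ i ∈ Finset.range (d + 1), (a i).natDegree ≤ D := fun i hi => Finset.le_sup (f := fun i => (a i).natDegree) hi
  have hcoeff : ∀ n : ℕ, ∑ i ∈ Finset.range (d + 1), ∑ j ∈ Finset.range (n + 1),
      (a i).coeff j * ((∏ s ∈ Finset.range i, (((n - j : ℕ) : ℚ) + s + 1))
        * PowerSeries.coeff (n - j + i) f) = 0 := by
    intro n
    have h := congrArg (PowerSeries.coeff n) heq
    rw [map_sum, map_zero] at h
    rw [← h]
    refine Finset.sum_congr rfl fun i _ => ?_
    rw [PowerSeries.coeff_mul, Finset.Nat.sum_antidiagonal_eq_sum_range_succ_mk]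
    refine Finset.sum_congr rfl fun j _ => ?_
    rw [coeff_deriv_iter, Polynomial.coeToPowerSeries.algHom_apply,
      PowerSeries.coeff_map, Polynomial.coeff_coe]
    simp
  have hrec := qpoly_rec D d a f hD hcoeff
  set i0 := Nat.findGreatest (fun i => a i ≠ 0) d with hi0def
  have hi0 : a i0 ≠ 0 := Nat.findGreatest_spec (P := fun i => a i ≠ 0) hi1d hai1
  have hi0d : i0 ≤ d := Nat.findGreatest_le d
  have hmax : ∀ i, i0 < i → i ≤ d → a i = 0 := fun i h1 h2 => by
    by_contra hne
    exact absurd (Nat.le_findGreatest (P := fun i => a i ≠ 0) h2 hne) (by omega)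
  have hj0D : (a i0).natTrailingDegree ≤ D :=
    le_trans (Polynomial.natTrailingDegree_le_natDegree _) (hD i0 (Finset.mem_range.2 (by omega)))
  have hqne := qpoly_ne_zero D d a i0 hi0d hi0 hmax hj0D
  have hkle : D + i0 - (a i0).natTrailingDegree ≤ d + D := by omega
  set e := Nat.findGreatest (fun k => qpoly D d a k ≠ 0) (d + D) with hedef
  have hqe : qpoly D d a e ≠ 0 := Nat.findGreatest_spec (P := fun k => qpoly D d a k ≠ 0) hkle hqne
  have hele : e ≤ d + D := Nat.findGreatest_le _
  have hqzero : ∀ k, e < k → k ≤ d + D → qpoly D d a k = 0 := fun k h1 h2 => by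
    by_contra hne
    exact absurd (Nat.le_findGreatest (P := fun k => qpoly D d a k ≠ 0) h2 hne) (by omega)
  have hrec2 : ∀ ℓ : ℕ, ∑ k ∈ Finset.range (e + 1),
      (qpoly D d a k).eval (ℓ : ℚ) * PowerSeries.coeff (ℓ + k) f = 0 := by
    intro ℓ
    rw [← hrec ℓ]
    refine Finset.sum_subset (Finset.range_subset_range.2 (by omega)) fun k hk hk2 => ?_
    have : qpoly D d a k = 0 :=
      hqzero k (by simp at hk2; omega) (by simp at hk; omega)
    rw [this, Polynomial.eval_zero, zero_mul]
  have hZ : ∀ k, ∃ (bk : ℤ) (pk : Polynomial ℤ), bk ≠ 0 ∧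
      pk.map (algebraMap ℤ ℚ) = Polynomial.C ((bk : ℚ)) * qpoly D d a k := by
    intro k
    obtain ⟨bk, hbk⟩ :=
      IsLocalization.integerNormalization_map_to_map (nonZeroDivisors ℤ) (qpoly D d a k)
    exact ⟨bk, _, nonZeroDivisors.coe_ne_zero bk, by rw [hbk, zsmul_eq_C_mul]⟩
  choose b p' hb hp' using hZ
  set c : ℤ := ∏ k ∈ Finset.range (e + 1), b k with hcdef
  have hc : (c : ℚ) ≠ 0 := Int.cast_ne_zero.2 (Finset.prod_ne_zero_iff.2 fun k _ => hb k)
  set p : ℕ → Polynomial ℤ :=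
    fun k => Polynomial.C (∏ j ∈ (Finset.range (e + 1)).erase k, b j) * p' k with hpdef
  have hpmap : ∀ k ∈ Finset.range (e + 1),
      (p k).map (algebraMap ℤ ℚ) = Polynomial.C ((c : ℚ)) * qpoly D d a k := by
    intro k hk
    rw [hpdef]
    simp only
    rw [Polynomial.map_mul, Polynomial.map_C, hp' k, ← mul_assoc, ← Polynomial.C_mul]
    congr 2
    rw [hcdef, ← Finset.mul_prod_erase _ _ hk]
    push_cast
    exact mul_comm _ _
  refine ⟨e, p, ?_, ?_⟩
  · intro hpe
    have hmap := congrArg (Polynomial.map (algebraMap ℤ ℚ)) hpe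
    rw [hpmap e (Finset.self_mem_range_succ e), Polynomial.map_zero] at hmap
    exact (mul_ne_zero (Polynomial.C_ne_zero.2 hc) hqe) hmap
  · intro ℓ
    have hterm : ∀ k ∈ Finset.range (e + 1),
        (((p k).eval (ℓ : ℤ) : ℤ) : ℚ) * PowerSeries.coeff (ℓ + k) f
          = (c : ℚ) * ((qpoly D d a k).eval (ℓ : ℚ) * PowerSeries.coeff (ℓ + k) f) := by
      intro k hk
      have h1 : (((p k).eval (ℓ : ℤ) : ℤ) : ℚ)
          = ((p k).map (algebraMap ℤ ℚ)).eval ((ℓ : ℤ) : ℚ) := by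
        rw [Polynomial.eval_intCast_map]
        simp
      rw [h1, hpmap k hk, Polynomial.eval_mul, Polynomial.eval_C]
      push_cast
      ring
    rw [Finset.sum_congr rfl hterm, ← Finset.mul_sum, hrec2 ℓ, mul_zero]
end

section
/- Every algebraic power series f ∈ ℚ⟦x⟧ (in one indeterminate) is D-finite: the ℚ(x)-vector space spanned by the derivatives f, f', f'', … is finite-dimensional. -/
open Polynomial PowerSeries

noncomputable section DF

abbrev KK : Type := FractionRing (PowerSeries ℚ)

def dfψ : PowerSeries ℚ →+* KK := algebraMap _ _

lemma dfψ_inj : Function.Injective dfψ := IsFractionRing.injective _ _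

def dfφP : Polynomial ℚ →+* KK := dfψ.comp Polynomial.coeToPowerSeries.ringHom

lemma dfφP_inj : Function.Injective dfφP := by
  intro p q h
  have h' : dfψ (Coe.coe p) = dfψ (Coe.coe q) := h
  exact Polynomial.coe_injective ℚ (dfψ_inj h')

instance : Algebra (RatFunc ℚ) KK := (IsFractionRing.lift (g := dfφP) dfφP_inj).toAlgebra

lemma dfφ_poly (p : Polynomial ℚ) :
    algebraMap (RatFunc ℚ) KK (algebraMap (Polynomial ℚ) (RatFunc ℚ) p) = dfφP p :=
  IsFractionRing.lift_algebraMap (g := dfφP) dfφP_inj p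

def DK (z : KK) : KK :=
  (dfψ (PowerSeries.derivativeFun (IsLocalization.sec (nonZeroDivisors (PowerSeries ℚ)) z).1)
    - z * dfψ (PowerSeries.derivativeFun ((IsLocalization.sec (nonZeroDivisors (PowerSeries ℚ)) z).2 : PowerSeries ℚ)))
  / dfψ ((IsLocalization.sec (nonZeroDivisors (PowerSeries ℚ)) z).2 : PowerSeries ℚ)

lemma dfψ_ne_zero {s : PowerSeries ℚ} (hs : s ≠ 0) : dfψ s ≠ 0 :=
  fun h => hs (dfψ_inj (by simpa using h))

lemma DK_spec {z : KK} {a s : PowerSeries ℚ} (hs : s ≠ 0) (h : z * dfψ s = dfψ a) :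
    DK z * dfψ s = dfψ a.derivativeFun - z * dfψ s.derivativeFun := by
  set b := (IsLocalization.sec (nonZeroDivisors (PowerSeries ℚ)) z).1 with hbdef
  set t := ((IsLocalization.sec (nonZeroDivisors (PowerSeries ℚ)) z).2 : PowerSeries ℚ) with htdef
  have ht0 : t ≠ 0 := nonZeroDivisors.ne_zero (IsLocalization.sec (nonZeroDivisors (PowerSeries ℚ)) z).2.2
  have hspec : z * dfψ t = dfψ b := IsLocalization.sec_spec _ z
  have key : a * t = b * s := by
    apply dfψ_inj
    rw [map_mul, map_mul, ← h, ← hspec]; ring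
  have hD := congrArg PowerSeries.derivativeFun key
  rw [PowerSeries.derivativeFun_mul, PowerSeries.derivativeFun_mul] at hD
  simp only [smul_eq_mul] at hD
  have hDK := congrArg dfψ hD
  simp only [map_add, map_mul] at hDK
  have hDKz : DK z = (dfψ b.derivativeFun - z * dfψ t.derivativeFun) / dfψ t := rfl
  rw [hDKz, div_mul_eq_mul_div, div_eq_iff (dfψ_ne_zero ht0)]
  linear_combination -hDK - dfψ t.derivativeFun * h + dfψ s.derivativeFun * hspec

lemma DK_psi (r : PowerSeries ℚ) : DK (dfψ r) = dfψ r.derivativeFun := by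
  have h : dfψ r * dfψ (1 : PowerSeries ℚ) = dfψ r := by simp
  have := DK_spec one_ne_zero h
  simpa [PowerSeries.derivativeFun_one] using this

lemma derivativeFun_zero' : (0 : PowerSeries ℚ).derivativeFun = 0 := by
  exact (PowerSeries.derivative ℚ).map_zero

lemma DK_zero : DK 0 = 0 := by
  have := DK_psi 0
  simpa [derivativeFun_zero'] using this

lemma DK_one : DK 1 = 0 := by
  have := DK_psi 1
  simpa [PowerSeries.derivativeFun_one] using this

lemma df_sec (x : KK) :
    x * dfψ ((IsLocalization.sec (nonZeroDivisors (PowerSeries ℚ)) x).2 : PowerSeries ℚ)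
      = dfψ (IsLocalization.sec (nonZeroDivisors (PowerSeries ℚ)) x).1 :=
  IsLocalization.sec_spec _ x

lemma DK_add (x y : KK) : DK (x + y) = DK x + DK y := by
  obtain ⟨⟨a, s⟩, ea⟩ : ∃ p : PowerSeries ℚ × (nonZeroDivisors (PowerSeries ℚ)),
      x * dfψ p.2 = dfψ p.1 := ⟨_, df_sec x⟩
  obtain ⟨⟨b, t⟩, eb⟩ : ∃ p : PowerSeries ℚ × (nonZeroDivisors (PowerSeries ℚ)),
      y * dfψ p.2 = dfψ p.1 := ⟨_, df_sec y⟩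
  have hs0 : (s : PowerSeries ℚ) ≠ 0 := nonZeroDivisors.ne_zero s.2
  have ht0 : (t : PowerSeries ℚ) ≠ 0 := nonZeroDivisors.ne_zero t.2
  have hst0 : (s : PowerSeries ℚ) * t ≠ 0 := mul_ne_zero hs0 ht0
  have exy : (x + y) * dfψ ((s : PowerSeries ℚ) * t) = dfψ (a * t + b * (s : PowerSeries ℚ)) := by
    simp only [map_mul, map_add]
    linear_combination dfψ (t : PowerSeries ℚ) * ea + dfψ (s : PowerSeries ℚ) * eb
  have hxy := DK_spec hst0 exy
  have hx := DK_spec hs0 ea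
  have hy := DK_spec ht0 eb
  have hcan : DK (x + y) * dfψ ((s : PowerSeries ℚ) * t) = (DK x + DK y) * dfψ ((s : PowerSeries ℚ) * t) := by
    rw [hxy]
    simp only [PowerSeries.derivativeFun_mul, PowerSeries.derivativeFun_add, smul_eq_mul,
      map_add, map_mul]
    linear_combination (-(dfψ (PowerSeries.derivativeFun (t : PowerSeries ℚ)))) * ea
      - dfψ (PowerSeries.derivativeFun (s : PowerSeries ℚ)) * eb
      - dfψ (t : PowerSeries ℚ) * hx - dfψ (s : PowerSeries ℚ) * hy
  exact mul_right_cancel₀ (dfψ_ne_zero hst0) hcan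

lemma DK_mul (x y : KK) : DK (x * y) = DK x * y + x * DK y := by
  obtain ⟨⟨a, s⟩, ea⟩ : ∃ p : PowerSeries ℚ × (nonZeroDivisors (PowerSeries ℚ)),
      x * dfψ p.2 = dfψ p.1 := ⟨_, df_sec x⟩
  obtain ⟨⟨b, t⟩, eb⟩ : ∃ p : PowerSeries ℚ × (nonZeroDivisors (PowerSeries ℚ)),
      y * dfψ p.2 = dfψ p.1 := ⟨_, df_sec y⟩
  have hs0 : (s : PowerSeries ℚ) ≠ 0 := nonZeroDivisors.ne_zero s.2
  have ht0 : (t : PowerSeries ℚ) ≠ 0 := nonZeroDivisors.ne_zero t.2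
  have hst0 : (s : PowerSeries ℚ) * t ≠ 0 := mul_ne_zero hs0 ht0
  have exy : (x * y) * dfψ ((s : PowerSeries ℚ) * t) = dfψ (a * b) := by
    simp only [map_mul]
    linear_combination dfψ (t : PowerSeries ℚ) * y * ea + dfψ (a : PowerSeries ℚ) * eb
  have hxy := DK_spec hst0 exy
  have hx := DK_spec hs0 ea
  have hy := DK_spec ht0 eb
  have hcan : DK (x * y) * dfψ ((s : PowerSeries ℚ) * t)
      = (DK x * y + x * DK y) * dfψ ((s : PowerSeries ℚ) * t) := by
    rw [hxy]
    simp only [PowerSeries.derivativeFun_mul, smul_eq_mul, map_add, map_mul]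
    linear_combination (-(dfψ (PowerSeries.derivativeFun b))) * ea
      - dfψ (PowerSeries.derivativeFun a) * eb
      - dfψ (t : PowerSeries ℚ) * y * hx - dfψ (s : PowerSeries ℚ) * x * hy
  exact mul_right_cancel₀ (dfψ_ne_zero hst0) hcan

lemma DK_pow_succ (x : KK) : ∀ n : ℕ, DK (x ^ (n + 1)) = (n + 1 : KK) * x ^ n * DK x
  | 0 => by simp
  | n + 1 => by
    rw [pow_succ, DK_mul, DK_pow_succ x n]
    push_cast
    ring

lemma DK_φP (p : Polynomial ℚ) : DK (dfφP p) = dfφP (Polynomial.derivative p) := by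
  have h1 : dfφP p = dfψ (p : PowerSeries ℚ) := rfl
  have h2 : dfφP (Polynomial.derivative p) = dfψ ((Polynomial.derivative p : Polynomial ℚ) : PowerSeries ℚ) := rfl
  rw [h1, h2, DK_psi]
  exact congrArg dfψ (PowerSeries.derivative_coe p)

lemma dfφP_ne_zero {p : Polynomial ℚ} (hp : p ≠ 0) : dfφP p ≠ 0 := by
  intro h
  exact hp (dfφP_inj (by simpa using h))

lemma dfφ_range (c : RatFunc ℚ) :
    ∃ e : RatFunc ℚ, DK (algebraMap (RatFunc ℚ) KK c) = algebraMap (RatFunc ℚ) KK e := by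
  have hden0 : dfφP c.denom ≠ 0 := dfφP_ne_zero (RatFunc.denom_ne_zero c)
  have hc' : c * algebraMap (Polynomial ℚ) (RatFunc ℚ) c.denom
      = algebraMap (Polynomial ℚ) (RatFunc ℚ) c.num := by
    exact ((div_eq_iff (RatFunc.algebraMap_ne_zero (RatFunc.denom_ne_zero c))).mp
      (RatFunc.num_div_denom c)).symm
  have hc : algebraMap (RatFunc ℚ) KK c * dfφP c.denom = dfφP c.num := by
    have := congrArg (algebraMap (RatFunc ℚ) KK) hc'
    rwa [map_mul, dfφ_poly, dfφ_poly] at this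
  have hDK := congrArg DK hc
  rw [DK_mul, DK_φP, DK_φP] at hDK
  refine ⟨(algebraMap _ _ (Polynomial.derivative c.num)
      - c * algebraMap _ _ (Polynomial.derivative c.denom)) / algebraMap _ _ c.denom, ?_⟩
  rw [map_div₀, map_sub, map_mul, dfφ_poly, dfφ_poly, dfφ_poly, eq_div_iff hden0]
  linear_combination hDK

lemma DK_iter_psi (g : PowerSeries ℚ) :
    ∀ i, DK^[i] (dfψ g) = dfψ ((PowerSeries.derivativeFun)^[i] g)
  | 0 => rfl
  | i + 1 => by
    rw [Function.iterate_succ_apply', Function.iterate_succ_apply', DK_iter_psi g i, DK_psi]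

lemma coe_algHom_eq (p : Polynomial ℚ) :
    Polynomial.coeToPowerSeries.algHom ℚ p = (p : PowerSeries ℚ) := by
  rw [Polynomial.coeToPowerSeries.algHom_apply]
  have : algebraMap ℚ ℚ = RingHom.id ℚ := by ext; simp
  rw [this]
  exact congrFun (PowerSeries.map_id) _

end DF

set_option maxHeartbeats 1000000 in
set_option synthInstance.maxHeartbeats 400000 in
/-- **Algebraic power series are D-finite.** If `f ∈ ℚ⟦x⟧` is algebraic over `ℚ[x]`, then
`f` satisfies a nontrivial linear differential equation with polynomial coefficients
(equivalently, the `ℚ(x)`-span of the derivatives of `f` is finite-dimensional). -/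
theorem algebraic_implies_dfinite
    (f : PowerSeries ℚ)
    (halg : ∃ P : Polynomial (Polynomial ℚ), P ≠ 0 ∧
      Polynomial.eval f (P.map (Polynomial.coeToPowerSeries.algHom ℚ).toRingHom) = 0) :
    ∃ d : ℕ, ∃ a : ℕ → Polynomial ℚ, (∃ i ≤ d, a i ≠ 0) ∧
      ∑ i ∈ Finset.range (d + 1),
        (Polynomial.coeToPowerSeries.algHom ℚ (a i)) * (PowerSeries.derivativeFun)^[i] f = 0 := by
  classical
  obtain ⟨P, hP0, hPf⟩ := halg
  set F := RatFunc ℚ with hF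
  set fK : KK := dfψ f with hfK
  have hring : (Polynomial.coeToPowerSeries.algHom ℚ).toRingHom
      = Polynomial.coeToPowerSeries.ringHom (R := ℚ) :=
    RingHom.ext fun p => by
      rw [Polynomial.coeToPowerSeries.ringHom_apply]
      exact coe_algHom_eq p
  have halgQ : Polynomial.aeval fK (P.map (algebraMap (Polynomial ℚ) F)) = 0 := by
    rw [Polynomial.aeval_def, Polynomial.eval₂_map]
    have hcomp : (algebraMap F KK).comp (algebraMap (Polynomial ℚ) F) = dfφP :=
      RingHom.ext fun p => dfφ_poly p
    rw [hcomp]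
    calc Polynomial.eval₂ dfφP fK P
        = P.eval₂ (dfψ.comp Polynomial.coeToPowerSeries.ringHom) (dfψ f) := rfl
      _ = dfψ (P.eval₂ Polynomial.coeToPowerSeries.ringHom f) :=
          (Polynomial.hom_eval₂ _ _ _ _).symm
      _ = dfψ (Polynomial.eval f (P.map Polynomial.coeToPowerSeries.ringHom)) := by
          rw [Polynomial.eval_map]
      _ = 0 := by rw [← hring, hPf, map_zero]
  have hQ0 : P.map (algebraMap (Polynomial ℚ) F) ≠ 0 :=
    (Polynomial.map_ne_zero_iff (IsFractionRing.injective (Polynomial ℚ) F)).mpr hP0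
  have hint : IsIntegral F fK := IsAlgebraic.isIntegral ⟨_, hQ0, halgQ⟩
  set A := Algebra.adjoin F {fK} with hA
  haveI hfd : FiniteDimensional F A := ⟨(Submodule.fg_top _).mpr hint.fg_adjoin_singleton⟩
  have hfKA : fK ∈ A := Algebra.subset_adjoin rfl
  -- derivative of an evaluated polynomial
  have haev : ∀ p : Polynomial F, ∃ g ∈ A, DK (Polynomial.aeval fK p)
      = g + Polynomial.aeval fK (Polynomial.derivative p) * DK fK := by
    intro p
    induction p using Polynomial.induction_on' with
    | add p q hp hq =>
      obtain ⟨g1, hg1, e1⟩ := hp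
      obtain ⟨g2, hg2, e2⟩ := hq
      exact ⟨g1 + g2, add_mem hg1 hg2, by
        rw [map_add, DK_add, e1, e2, map_add, map_add]; ring⟩
    | monomial n c =>
      obtain ⟨e, he⟩ := dfφ_range c
      have hmono : Polynomial.aeval fK (Polynomial.monomial n c)
          = algebraMap F KK c * fK ^ n := Polynomial.aeval_monomial fK
      cases n with
      | zero =>
        refine ⟨algebraMap F KK e * fK ^ 0, mul_mem (Subalgebra.algebraMap_mem A e)
          (pow_mem hfKA _), ?_⟩
        rw [hmono, DK_mul, he, pow_zero, DK_one]
        simp [Polynomial.derivative_monomial]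
        rfl
      | succ n =>
        refine ⟨algebraMap F KK e * fK ^ (n+1), mul_mem (Subalgebra.algebraMap_mem A e)
          (pow_mem hfKA _), ?_⟩
        rw [hmono, DK_mul, he, DK_pow_succ, Polynomial.derivative_monomial]
        have h5 : Polynomial.aeval fK (Polynomial.monomial (n + 1 - 1) (c * (n+1 : ℕ)))
            = algebraMap F KK (c * (n+1 : ℕ)) * fK ^ (n + 1 - 1) :=
          Polynomial.aeval_monomial fK
        rw [h5, map_mul, map_natCast]
        push_cast
        ring
  -- DK fK ∈ A
  have hm0 : Polynomial.aeval fK (minpoly F fK) = 0 := minpoly.aeval F fK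
  have hmderiv_ne : Polynomial.aeval fK (Polynomial.derivative (minpoly F fK)) ≠ 0 := by
    intro h
    have hd0 : Polynomial.derivative (minpoly F fK) ≠ 0 := by
      intro h0
      have h1 := Polynomial.natDegree_eq_zero_of_derivative_eq_zero h0
      have h2 := minpoly.natDegree_pos hint
      omega
    have h3 := minpoly.degree_le_of_ne_zero F fK hd0 h
    exact (not_lt.mpr h3) (Polynomial.degree_derivative_lt (minpoly.ne_zero hint))
  have hu : Polynomial.aeval fK (Polynomial.derivative (minpoly F fK)) ∈ A := by
    rw [hA, Algebra.adjoin_singleton_eq_range_aeval]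
    exact ⟨_, rfl⟩
  obtain ⟨g, hgA, hgeq⟩ := haev (minpoly F fK)
  have hDfK : DK fK ∈ A := by
    have key : Polynomial.aeval fK (Polynomial.derivative (minpoly F fK)) * DK fK = -g := by
      have h0 : (0:KK) = g
          + Polynomial.aeval fK (Polynomial.derivative (minpoly F fK)) * DK fK := by
        rw [← hgeq, hm0, DK_zero]
      linear_combination -h0
    set u : A := ⟨_, hu⟩ with hudef
    have hu0 : u ≠ 0 := fun h => hmderiv_ne (by
      simpa [hudef, Subtype.ext_iff] using h)
    have hunit : IsUnit u := (IsIntegral.of_finite F u).isUnit hu0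
    obtain ⟨v, hv⟩ := isUnit_iff_exists_inv.mp hunit
    have huv : (u : KK) * (v : KK) = 1 := by exact_mod_cast congrArg Subtype.val hv
    have hrepr : DK fK = (v : KK) * (-g) := by
      linear_combination (v : KK) * key - DK fK * huv
    rw [hrepr]
    exact mul_mem v.2 (neg_mem hgA)
  -- stability of A under DK
  have hstab : ∀ z ∈ A, DK z ∈ A := by
    intro z hz
    refine Algebra.adjoin_induction (fun x hx => ?_) (fun r => ?_)
      (fun x y hx hy ihx ihy => ?_) (fun x y hx hy ihx ihy => ?_) hz
    · rcases Set.mem_singleton_iff.mp hx with rfl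
      exact hDfK
    · obtain ⟨e, he⟩ := dfφ_range r
      rw [he]
      exact Subalgebra.algebraMap_mem A e
    · rw [DK_add]; exact add_mem ihx ihy
    · rw [DK_mul]; exact add_mem (mul_mem ihx hy) (mul_mem hx ihy)
  have hiter : ∀ i : ℕ, DK^[i] fK ∈ A := by
    intro i
    induction i with
    | zero => exact hfKA
    | succ i ih => rw [Function.iterate_succ_apply']; exact hstab _ ih
  -- linear dependence of the derivatives
  set n := Module.finrank F A with hn
  set w : Fin (n+1) → A := fun i => ⟨DK^[(i : ℕ)] fK, hiter i⟩ with hw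
  have hnotli : ¬ LinearIndependent F w := by
    intro h
    have h1 := h.fintype_card_le_finrank
    rw [Fintype.card_fin] at h1
    omega
  obtain ⟨c, hcsum, i0, hci0⟩ := Fintype.not_linearIndependent_iff.mp hnotli
  have hsumK : ∑ i : Fin (n+1), algebraMap F KK (c i) * DK^[(i : ℕ)] fK = 0 := by
    have h2 := congrArg (Subalgebra.val A) hcsum
    rw [map_sum, map_zero] at h2
    rw [← h2]
    refine Finset.sum_congr rfl fun i _ => ?_
    rw [map_smul, Algebra.smul_def]
    rfl
  -- clear denominators
  obtain ⟨b, hb⟩ := IsLocalization.exist_integer_multiples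
    (nonZeroDivisors (Polynomial ℚ)) Finset.univ c
  choose aa haa using fun i : Fin (n+1) => hb i (Finset.mem_univ i)
  have hbF : algebraMap (Polynomial ℚ) F (b : Polynomial ℚ) ≠ 0 :=
    RatFunc.algebraMap_ne_zero (nonZeroDivisors.ne_zero b.2)
  refine ⟨n, fun i => if h : i < n + 1 then aa ⟨i, h⟩ else 0, ⟨i0, Fin.is_le i0, ?_⟩, ?_⟩
  · show (if h : (i0 : ℕ) < n + 1 then aa ⟨(i0 : ℕ), h⟩ else 0) ≠ 0
    rw [dif_pos i0.isLt]
    intro h0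
    apply hci0
    rw [Fin.eta] at h0
    have h6 := haa i0
    rw [h0, map_zero, Algebra.smul_def] at h6
    exact (mul_eq_zero.mp h6.symm).resolve_left hbF
  · apply dfψ_inj
    rw [map_sum, map_zero]
    rw [← Fin.sum_univ_eq_sum_range (fun i => dfψ ((Polynomial.coeToPowerSeries.algHom ℚ
      (if h : i < n + 1 then aa ⟨i, h⟩ else 0)) * (PowerSeries.derivativeFun)^[i] f)) (n+1)]
    have hterm : ∀ i : Fin (n+1), dfψ ((Polynomial.coeToPowerSeries.algHom ℚ
        (if h : (i : ℕ) < n + 1 then aa ⟨(i : ℕ), h⟩ else 0))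
          * (PowerSeries.derivativeFun)^[(i : ℕ)] f)
        = dfφP (aa i) * DK^[(i : ℕ)] fK := by
      intro i
      rw [map_mul, dif_pos i.isLt, Fin.eta, coe_algHom_eq, DK_iter_psi]
      rfl
    rw [Finset.sum_congr rfl fun i _ => hterm i]
    calc ∑ i : Fin (n+1), dfφP (aa i) * DK^[(i : ℕ)] fK
        = algebraMap F KK (algebraMap (Polynomial ℚ) F (b : Polynomial ℚ))
            * ∑ i : Fin (n+1), algebraMap F KK (c i) * DK^[(i : ℕ)] fK := by
          rw [Finset.mul_sum]
          refine Finset.sum_congr rfl fun i _ => ?_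
          rw [← dfφ_poly (aa i), haa i, Algebra.smul_def, map_mul]
          ring
      _ = 0 := by rw [hsumK, mul_zero]
end

section
/- The exponential series exp(x) = Σₗ xˡ/ℓ! ∈ ℚ⟦x⟧ is not algebraic over ℚ[x]. -/
open PowerSeries Polynomial Finset

noncomputable def expQ : PowerSeries ℚ := PowerSeries.mk fun ℓ : ℕ => (1 : ℚ) / (Nat.factorial ℓ)

lemma deriv_expQ : d⁄dX ℚ expQ = expQ := by
  ext n
  rw [PowerSeries.coeff_derivative, expQ, PowerSeries.coeff_mk, PowerSeries.coeff_mk,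
    Nat.factorial_succ]
  have h1 : ((n.factorial : ℚ)) ≠ 0 := Nat.cast_ne_zero.mpr n.factorial_ne_zero
  have h2 : ((n:ℚ) + 1) ≠ 0 := by positivity
  push_cast
  field_simp

lemma expQ_ne_zero : expQ ≠ 0 := by
  intro h
  have : (PowerSeries.coeff 0) expQ = 1 := by simp [expQ]
  rw [h] at this; simp at this

lemma Dterm (c : ℚ[X]) (i : ℕ) :
    d⁄dX ℚ ((c : PowerSeries ℚ) * expQ ^ i) =
      ((Polynomial.derivative c : ℚ[X]) : PowerSeries ℚ) * expQ ^ i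
        + (i : PowerSeries ℚ) * ((c : PowerSeries ℚ) * expQ ^ i) := by
  rw [Derivation.leibniz, Derivation.leibniz_pow, deriv_expQ, PowerSeries.derivative_coe]
  cases i with
  | zero => simp
  | succ k =>
      simp only [smul_eq_mul, nsmul_eq_mul]
      push_cast
      ring_nf

lemma coe_natCastQ (m : ℕ) : (((m : ℚ[X])) : PowerSeries ℚ) = (m : PowerSeries ℚ) := by
  rw [← Polynomial.C_eq_natCast, Polynomial.coe_C, map_natCast]

/-- auxiliary combination of coefficients -/
noncomputable def comb (a : ℕ → ℚ[X]) (n : ℕ) (i : ℕ) : ℚ[X] :=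
  a (n+1) * (Polynomial.derivative (a i) + ((i : ℕ) : ℚ[X]) * a i)
    - (Polynomial.derivative (a (n+1)) + ((n+1 : ℕ) : ℚ[X]) * a (n+1)) * a i

lemma key : ∀ n : ℕ, ∀ a : ℕ → ℚ[X],
    (∑ i ∈ Finset.range (n+1), ((a i : PowerSeries ℚ)) * expQ ^ i = 0) →
    ∀ i ≤ n, a i = 0 := by
  intro n
  induction n with
  | zero =>
      intro a h i hi
      interval_cases i
      have h0 : ((a 0 : PowerSeries ℚ)) = 0 := by simpa using h
      exact Polynomial.coe_eq_zero_iff.mp h0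
  | succ n IH =>
      intro a h
      -- derivative of the relation
      have hD : ∑ i ∈ Finset.range (n+2),
          (((Polynomial.derivative (a i) : ℚ[X]) : PowerSeries ℚ) * expQ ^ i
            + (i : PowerSeries ℚ) * ((a i : PowerSeries ℚ) * expQ ^ i)) = 0 := by
        have h2 := congrArg (d⁄dX ℚ) h
        rw [map_zero, map_sum] at h2
        rw [← h2]
        exact Finset.sum_congr rfl fun i _ => (Dterm (a i) i).symm
      have hb : ∑ i ∈ Finset.range (n+2), ((comb a n i : PowerSeries ℚ)) * expQ ^ i = 0 := by
        have heq : ∑ i ∈ Finset.range (n+2), ((comb a n i : PowerSeries ℚ)) * expQ ^ i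
            = ((a (n+1) : ℚ[X]) : PowerSeries ℚ) *
                (∑ i ∈ Finset.range (n+2),
                  (((Polynomial.derivative (a i) : ℚ[X]) : PowerSeries ℚ) * expQ ^ i
                    + (i : PowerSeries ℚ) * ((a i : PowerSeries ℚ) * expQ ^ i)))
              - ((Polynomial.derivative (a (n+1))
                    + ((n+1 : ℕ) : ℚ[X]) * a (n+1) : ℚ[X]) : PowerSeries ℚ) *
                (∑ i ∈ Finset.range (n+2), ((a i : PowerSeries ℚ)) * expQ ^ i) := by
          rw [Finset.mul_sum, Finset.mul_sum, ← Finset.sum_sub_distrib]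
          refine Finset.sum_congr rfl fun i _ => ?_
          simp only [comb, Polynomial.coe_sub, Polynomial.coe_mul, Polynomial.coe_add,
            coe_natCastQ]
          ring
        rw [heq, hD, h, mul_zero, mul_zero, sub_zero]
      have hbtop : comb a n (n+1) = 0 := by simp only [comb]; ring
      have hb' : ∑ i ∈ Finset.range (n+1), ((comb a n i : PowerSeries ℚ)) * expQ ^ i = 0 := by
        rw [Finset.sum_range_succ, hbtop] at hb
        simpa using hb
      have hbz : ∀ i ≤ n, comb a n i = 0 := IH _ hb'
      have hc : a (n+1) = 0 := by
        by_contra hc0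
        have ha : ∀ i ≤ n, a i = 0 := by
          intro i hi
          by_contra ha0
          have hbi := hbz i hi
          rw [comb] at hbi
          have hcast : ((n+1-i : ℕ) : ℚ[X]) = ((n+1 : ℕ) : ℚ[X]) - ((i : ℕ) : ℚ[X]) := by
            push_cast [Nat.cast_sub (by omega : i ≤ n+1)]
            ring
          have keyeq : a (n+1) * Polynomial.derivative (a i)
                - Polynomial.derivative (a (n+1)) * a i
              = ((n+1-i : ℕ) : ℚ[X]) * (a (n+1) * a i) := by
            rw [hcast]
            linear_combination hbi
          have hm : (((n+1-i : ℕ) : ℚ) ) ≠ 0 := Nat.cast_ne_zero.mpr (by omega)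
          have hdR : (((n+1-i : ℕ) : ℚ[X]) * (a (n+1) * a i)).degree
              = (a (n+1)).degree + (a i).degree := by
            rw [Polynomial.degree_mul, Polynomial.degree_mul, ← Polynomial.C_eq_natCast,
              Polynomial.degree_C hm, zero_add]
          have hdbot : (a (n+1)).degree ≠ ⊥ := by
            simpa [Polynomial.degree_eq_bot] using hc0
          have hdbot2 : (a i).degree ≠ ⊥ := by
            simpa [Polynomial.degree_eq_bot] using ha0
          have hdL : (a (n+1) * Polynomial.derivative (a i)
                - Polynomial.derivative (a (n+1)) * a i).degree
              < (a (n+1)).degree + (a i).degree := by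
            refine lt_of_le_of_lt (Polynomial.degree_sub_le _ _) (max_lt ?_ ?_)
            · refine lt_of_le_of_lt (Polynomial.degree_mul_le _ _) ?_
              exact WithBot.add_lt_add_left hdbot (Polynomial.degree_derivative_lt ha0)
            · refine lt_of_le_of_lt (Polynomial.degree_mul_le _ _) ?_
              exact WithBot.add_lt_add_right hdbot2 (Polynomial.degree_derivative_lt hc0)
          rw [keyeq, hdR] at hdL
          exact lt_irrefl _ hdL
        have hmain : ((a (n+1) : ℚ[X]) : PowerSeries ℚ) * expQ ^ (n+1) = 0 := by
          rw [Finset.sum_range_succ] at h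
          have hz : ∑ i ∈ Finset.range (n+1), ((a i : PowerSeries ℚ)) * expQ ^ i = 0 := by
            refine Finset.sum_eq_zero fun i hi => ?_
            rw [ha i (Finset.mem_range_succ_iff.mp hi)]
            simp
          rw [hz, zero_add] at h
          exact h
        rcases mul_eq_zero.mp hmain with h' | h'
        · exact hc0 (Polynomial.coe_eq_zero_iff.mp h')
        · exact pow_ne_zero _ expQ_ne_zero h'
      have h' : ∑ i ∈ Finset.range (n+1), ((a i : PowerSeries ℚ)) * expQ ^ i = 0 := by
        rw [Finset.sum_range_succ, hc] at h
        simpa using h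
      intro i hi
      rcases Nat.lt_succ_iff_lt_or_eq.mp (Nat.lt_succ_of_le hi) with h'' | h''
      · exact IH a h' i (Nat.lt_succ_iff.mp h'')
      · rw [h'']; exact hc

/-- The exponential series `exp(x) = Σ xˡ/ℓ!` is not algebraic over `ℚ[x]`. -/
theorem exp_not_algebraic :
    ¬ ∃ P : Polynomial (Polynomial ℚ), P ≠ 0 ∧
      Polynomial.eval (PowerSeries.mk fun ℓ : ℕ => (1 : ℚ) / (Nat.factorial ℓ))
        (P.map (Polynomial.coeToPowerSeries.algHom ℚ).toRingHom) = 0 := by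
  rintro ⟨P, hP0, hPeval⟩
  have hφ : ∀ q : ℚ[X],
      (Polynomial.coeToPowerSeries.algHom ℚ).toRingHom q = (q : PowerSeries ℚ) := by
    intro q
    ext n
    simp [Polynomial.coeToPowerSeries.algHom_apply, PowerSeries.coeff_map, Polynomial.coeff_coe]
  have hf : (PowerSeries.mk fun ℓ : ℕ => (1 : ℚ) / (Nat.factorial ℓ)) = expQ := rfl
  rw [hf] at hPeval
  have heval : Polynomial.eval expQ (P.map (Polynomial.coeToPowerSeries.algHom ℚ).toRingHom)
      = ∑ i ∈ Finset.range (P.natDegree + 1),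
          ((P.coeff i : ℚ[X]) : PowerSeries ℚ) * expQ ^ i := by
    rw [Polynomial.eval_eq_sum_range' (Nat.lt_succ_of_le Polynomial.natDegree_map_le)]
    exact Finset.sum_congr rfl fun i _ => by rw [Polynomial.coeff_map, hφ]
  have hz := key P.natDegree P.coeff (by rw [← heval]; exact hPeval) P.natDegree le_rfl
  exact hP0 (Polynomial.leadingCoeff_eq_zero.mp hz)
end

section
/- Let A be an integral domain with fraction field K, and let f = Σ_{s∈ℝ₊} a_s x^s ∈ K⟦x^{ℝ₊}⟧ be algebraic and separable over A⟦x^{ℝ₊}⟧. Then there exists a nonzero a ∈ A such that a^{⌈s⌉+1}·a_s ∈ A for all s ∈ ℝ₊. -/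
open Finset Polynomial

section EisensteinAux

variable {A K : Type*} [CommRing A] [Field K] [Algebra A K]

/-- `x ∈ K` becomes integral after multiplying by `b^k`. -/
def EGood (b : A) (k : ℕ) (x : K) : Prop :=
  ∃ c : A, algebraMap A K c = (algebraMap A K b) ^ k * x

namespace EGood

variable {b : A} {k l : ℕ} {x y : K}

theorem zero : EGood b k (0 : K) := ⟨0, by simp⟩

theorem add (hx : EGood b k x) (hy : EGood b k y) : EGood b k (x + y) := by
  obtain ⟨c, hc⟩ := hx; obtain ⟨d, hd⟩ := hy
  exact ⟨c + d, by rw [map_add, hc, hd, mul_add]⟩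

theorem neg (hx : EGood b k x) : EGood b k (-x) := by
  obtain ⟨c, hc⟩ := hx
  exact ⟨-c, by rw [map_neg, hc, mul_neg]⟩

theorem mul (hx : EGood b k x) (hy : EGood b l y) : EGood b (k + l) (x * y) := by
  obtain ⟨c, hc⟩ := hx; obtain ⟨d, hd⟩ := hy
  exact ⟨c * d, by rw [map_mul, hc, hd, pow_add]; ring⟩

theorem mono (hkl : k ≤ l) (hx : EGood b k x) : EGood b l x := by
  obtain ⟨c, hc⟩ := hx
  refine ⟨b ^ (l - k) * c, ?_⟩
  rw [map_mul, map_pow, hc, ← mul_assoc, ← pow_add]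
  congr 2
  omega

theorem nsmul (n : ℕ) (hx : EGood b k x) : EGood b k (n • x) := by
  obtain ⟨c, hc⟩ := hx
  exact ⟨n • c, by rw [map_nsmul, hc, mul_smul_comm]⟩

theorem sum {ι : Type*} {s : Finset ι} {g : ι → K}
    (h : ∀ i ∈ s, EGood b k (g i)) : EGood b k (∑ i ∈ s, g i) := by
  classical
  induction s using Finset.induction_on with
  | empty => simpa using EGood.zero
  | insert _ _ hnot ih =>
    rename_i a s
    rw [Finset.sum_insert hnot]
    exact (h a (Finset.mem_insert_self a s)).add
      (ih fun i hi => h i (Finset.mem_insert_of_mem hi))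

end EGood

/-- Lower bound on the support of a Hahn series. -/
def SuppLB (σ : ℝ) (z : HahnSeries ℝ K) : Prop := ∀ t : ℝ, t < σ → z.coeff t = 0

/-- Strict lower bound on the support of a Hahn series. -/
def SuppLBs (σ : ℝ) (z : HahnSeries ℝ K) : Prop := ∀ t : ℝ, t ≤ σ → z.coeff t = 0

theorem hahn_nsmul_coeff {K : Type*} [Field K] (n : ℕ) (z : HahnSeries ℝ K) (t : ℝ) :
    (n • z).coeff t = n • z.coeff t := by
  induction n with
  | zero => simp
  | succ n ih => rw [succ_nsmul, succ_nsmul, HahnSeries.coeff_add, ih]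

namespace SuppLB

variable {σ τ : ℝ} {z w : HahnSeries ℝ K}

theorem mono (h : τ ≤ σ) (hz : SuppLB σ z) : SuppLB τ z :=
  fun t ht => hz t (lt_of_lt_of_le ht h)

theorem zero_ : SuppLB σ (0 : HahnSeries ℝ K) := fun _ _ => rfl

theorem add (hz : SuppLB σ z) (hw : SuppLB σ w) : SuppLB σ (z + w) := by
  intro t ht
  rw [HahnSeries.coeff_add, hz t ht, hw t ht, add_zero]

theorem sub (hz : SuppLB σ z) (hw : SuppLB σ w) : SuppLB σ (z - w) := by
  intro t ht
  rw [HahnSeries.coeff_sub, hz t ht, hw t ht, sub_zero]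

theorem mul (hz : SuppLB σ z) (hw : SuppLB τ w) : SuppLB (σ + τ) (z * w) := by
  intro t ht
  rw [HahnSeries.coeff_mul]
  apply Finset.sum_eq_zero
  intro ij hij
  rw [Finset.mem_addAntidiagonal] at hij
  obtain ⟨h1, h2, h3⟩ := hij
  exfalso
  have hb1 : σ ≤ ij.1 := by
    by_contra hcon
    exact h1 (hz ij.1 (by linarith))
  have hb2 : τ ≤ ij.2 := by
    by_contra hcon
    exact h2 (hw ij.2 (by linarith))
  linarith

theorem one_ : SuppLB 0 (1 : HahnSeries ℝ K) := by
  intro t ht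
  rw [HahnSeries.coeff_one, if_neg (by linarith)]

theorem mul0 (hz : SuppLB σ z) (hw : SuppLB 0 w) : SuppLB σ (z * w) := by
  simpa using hz.mul hw

theorem pow (hz : SuppLB 0 z) : ∀ n : ℕ, SuppLB 0 (z ^ n) := by
  intro n
  induction n with
  | zero => simpa using SuppLB.one_ (K := K)
  | succ n ih => rw [pow_succ]; simpa using ih.mul hz

theorem sum {ι : Type*} {s : Finset ι} {g : ι → HahnSeries ℝ K}
    (h : ∀ i ∈ s, SuppLB σ (g i)) : SuppLB σ (∑ i ∈ s, g i) := by
  classical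
  induction s using Finset.induction_on with
  | empty => simpa using SuppLB.zero_
  | insert _ _ hnot ih =>
    rename_i a s
    rw [Finset.sum_insert hnot]
    exact (h a (Finset.mem_insert_self a s)).add
      (ih fun i hi => h i (Finset.mem_insert_of_mem hi))

theorem nsmul (n : ℕ) (hz : SuppLB σ z) : SuppLB σ (n • z) := by
  intro t ht
  rw [hahn_nsmul_coeff, hz t ht, smul_zero]

end SuppLB

theorem SuppLBs.mul0 {σ : ℝ} {z w : HahnSeries ℝ K} (hz : SuppLBs σ z) (hw : SuppLB 0 w) :
    SuppLBs σ (z * w) := by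
  intro t ht
  rw [HahnSeries.coeff_mul]
  apply Finset.sum_eq_zero
  intro ij hij
  rw [Finset.mem_addAntidiagonal] at hij
  obtain ⟨h1, h2, h3⟩ := hij
  exfalso
  have hb1 : ¬ ij.1 ≤ σ := fun hcon => h1 (hz ij.1 hcon)
  have hb2 : 0 ≤ ij.2 := by
    by_contra hcon
    exact h2 (hw ij.2 (by linarith))
  push_neg at hb1
  linarith

/-- All coefficients of a Hahn series satisfy `EGood b k`. -/
def GoodC (b : A) (k : ℕ) (z : HahnSeries ℝ K) : Prop := ∀ t : ℝ, EGood b k (z.coeff t)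

namespace GoodC

variable {b : A} {k l : ℕ} {z w : HahnSeries ℝ K}

theorem add (hz : GoodC b k z) (hw : GoodC b k w) : GoodC b k (z + w) := by
  intro t; rw [HahnSeries.coeff_add]; exact (hz t).add (hw t)

theorem mul (hz : GoodC b k z) (hw : GoodC b l w) : GoodC b (k + l) (z * w) := by
  intro t
  rw [HahnSeries.coeff_mul]
  exact EGood.sum fun ij _ => (hz ij.1).mul (hw ij.2)

theorem mono (hkl : k ≤ l) (hz : GoodC b k z) : GoodC b l z :=
  fun t => (hz t).mono hkl

theorem one_ : GoodC b 0 (1 : HahnSeries ℝ K) := by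
  intro t
  rw [HahnSeries.coeff_one]
  split
  · exact ⟨1, by simp⟩
  · exact EGood.zero

theorem pow (hz : GoodC b 1 z) : ∀ n : ℕ, GoodC b n (z ^ n) := by
  intro n
  induction n with
  | zero => simpa using GoodC.one_
  | succ n ih => rw [pow_succ]; exact ih.mul hz

theorem sum {ι : Type*} {s : Finset ι} {g : ι → HahnSeries ℝ K}
    (h : ∀ i ∈ s, GoodC b k (g i)) : GoodC b k (∑ i ∈ s, g i) := by
  classical
  induction s using Finset.induction_on with
  | empty => intro t; simpa using EGood.zero
  | insert _ _ hnot ih =>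
    rename_i a s
    rw [Finset.sum_insert hnot]
    exact (h a (Finset.mem_insert_self a s)).add
      (ih fun i hi => h i (Finset.mem_insert_of_mem hi))

theorem nsmul (n : ℕ) (hz : GoodC b k z) : GoodC b k (n • z) := by
  intro t
  rw [hahn_nsmul_coeff]
  exact (hz t).nsmul n

end GoodC

theorem goodC_eval {b : A} {Q : Polynomial (HahnSeries ℝ K)} {z : HahnSeries ℝ K} {n : ℕ}
    (hQ : ∀ i, GoodC b 0 (Q.coeff i)) (hz : GoodC b 1 z) (hdeg : Q.natDegree ≤ n) :
    GoodC b n (Q.eval z) := by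
  rw [Polynomial.eval_eq_sum_range' (lt_of_le_of_lt hdeg (Nat.lt_succ_self n)) z]
  refine GoodC.sum fun i hi => ?_
  have : GoodC b (0 + i) (Q.coeff i * z ^ i) := (hQ i).mul (hz.pow i)
  exact this.mono (by rw [Finset.mem_range] at hi; omega)

theorem suppLB_eval {Q : Polynomial (HahnSeries ℝ K)} {z : HahnSeries ℝ K}
    (hQ : ∀ i, SuppLB 0 (Q.coeff i)) (hz : SuppLB 0 z) :
    SuppLB 0 (Q.eval z) := by
  rw [Polynomial.eval_eq_sum_range]
  exact SuppLB.sum fun i _ => (hQ i).mul0 (hz.pow i)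

end EisensteinAux

section EisensteinAux2

open Finset Polynomial

variable {A K : Type*} [CommRing A] [Field K] [Algebra A K]

theorem hahn_coeff_sum {ι : Type*} (s : Finset ι) (g : ι → HahnSeries ℝ K) (t : ℝ) :
    (∑ i ∈ s, g i).coeff t = ∑ i ∈ s, (g i).coeff t := by
  classical
  induction s using Finset.induction_on with
  | empty => simp
  | insert _ _ hnot ih =>
    rename_i a s
    rw [Finset.sum_insert hnot, Finset.sum_insert hnot, HahnSeries.coeff_add, ih]

theorem nat_floor_superadd {a c : ℝ} (ha : 0 ≤ a) (hc : 0 ≤ c) :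
    ⌊a⌋₊ + ⌊c⌋₊ ≤ ⌊a + c⌋₊ := by
  rw [Nat.le_floor_iff (by linarith)]
  push_cast
  have := Nat.floor_le ha
  have := Nat.floor_le hc
  linarith

theorem nat_floor_add_nat_le {a c : ℝ} (ha : 0 ≤ a) {k : ℕ} (h : a + k ≤ c) :
    ⌊a⌋₊ + k ≤ ⌊c⌋₊ := by
  have hk : (0:ℝ) ≤ k := Nat.cast_nonneg k
  rw [Nat.le_floor_iff (by linarith)]
  push_cast
  have := Nat.floor_le ha
  linarith

/-- The two-variable geometric sum. -/
noncomputable def egeom (x y : HahnSeries ℝ K) (i : ℕ) : HahnSeries ℝ K :=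
  ∑ j ∈ Finset.range i, x ^ j * y ^ (i - 1 - j)

/-- The divided difference of a polynomial. -/
noncomputable def edd (Q : Polynomial (HahnSeries ℝ K)) (x y : HahnSeries ℝ K) :
    HahnSeries ℝ K :=
  ∑ i ∈ Finset.range (Q.natDegree + 1), Q.coeff i * egeom x y i

theorem edd_mul (Q : Polynomial (HahnSeries ℝ K)) (x y : HahnSeries ℝ K) :
    Q.eval x - Q.eval y = (x - y) * edd Q x y := by
  rw [Polynomial.eval_eq_sum_range, Polynomial.eval_eq_sum_range, ← Finset.sum_sub_distrib,
    edd, Finset.mul_sum]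
  refine Finset.sum_congr rfl fun i _ => ?_
  have h := geom_sum₂_mul x y i
  rw [egeom, ← mul_sub, ← h]
  ring

theorem suppLB_egeom {x y : HahnSeries ℝ K} (hx : SuppLB 0 x) (hy : SuppLB 0 y) (i : ℕ) :
    SuppLB 0 (egeom x y i) :=
  SuppLB.sum fun j _ => by simpa using (hx.pow j).mul (hy.pow (i - 1 - j))

theorem suppLB_edd {Q : Polynomial (HahnSeries ℝ K)} {x y : HahnSeries ℝ K}
    (hQ : ∀ i, SuppLB 0 (Q.coeff i)) (hx : SuppLB 0 x) (hy : SuppLB 0 y) :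
    SuppLB 0 (edd Q x y) :=
  SuppLB.sum fun i _ => by simpa using (hQ i).mul (suppLB_egeom hx hy i)

theorem edd_self (Q : Polynomial (HahnSeries ℝ K)) (x : HahnSeries ℝ K) :
    edd Q x x = (Polynomial.derivative Q).eval x := by
  have hs : (Q.sum fun n a => a * (n : HahnSeries ℝ K) * x ^ (n - 1))
      = ∑ i ∈ Finset.range (Q.natDegree + 1),
        Q.coeff i * (i : HahnSeries ℝ K) * x ^ (i - 1) :=
    Polynomial.sum_over_range Q (fun n => by simp)
  rw [Polynomial.derivative_eval, hs]
  refine Finset.sum_congr rfl fun i _ => ?_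
  have : egeom x x i = (i : HahnSeries ℝ K) * x ^ (i - 1) := by
    rw [egeom]
    have : ∀ j ∈ Finset.range i, x ^ j * x ^ (i - 1 - j) = x ^ (i - 1) := by
      intro j hj
      rw [Finset.mem_range] at hj
      rw [← pow_add]
      congr 1
      omega
    rw [Finset.sum_congr rfl this, Finset.sum_const, Finset.card_range, nsmul_eq_mul]
  rw [this]
  ring

theorem edd_diff (Q : Polynomial (HahnSeries ℝ K)) (x y : HahnSeries ℝ K)
    (hQ : ∀ i, SuppLB 0 (Q.coeff i)) (hx : SuppLB 0 x) (hy : SuppLB 0 y) :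
    ∃ W : HahnSeries ℝ K, SuppLB 0 W ∧ edd Q x y - edd Q x x = (y - x) * W := by
  refine ⟨∑ i ∈ Finset.range (Q.natDegree + 1), Q.coeff i *
    ∑ j ∈ Finset.range i, x ^ j * egeom y x (i - 1 - j), ?_, ?_⟩
  · refine SuppLB.sum fun i _ => ?_
    have := (hQ i).mul (SuppLB.sum (σ := 0) fun j (_ : j ∈ Finset.range i) => by
      simpa using (hx.pow j).mul (suppLB_egeom hy hx (i - 1 - j)))
    simpa using this
  · rw [edd, edd, ← Finset.sum_sub_distrib, Finset.mul_sum]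
    refine Finset.sum_congr rfl fun i _ => ?_
    rw [egeom, egeom, ← mul_sub, ← Finset.sum_sub_distrib]
    have : ∀ j ∈ Finset.range i, x ^ j * y ^ (i - 1 - j) - x ^ j * x ^ (i - 1 - j)
        = x ^ j * (egeom y x (i - 1 - j) * (y - x)) := by
      intro j _
      rw [egeom, geom_sum₂_mul y x (i - 1 - j)]
      ring
    rw [Finset.sum_congr rfl this]
    rw [Finset.mul_sum, Finset.mul_sum, Finset.mul_sum]
    refine Finset.sum_congr rfl fun j _ => ?_
    ring

end EisensteinAux2

section EisensteinAux3

open Finset Polynomial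

variable {A K : Type*} [CommRing A] [Field K] [Algebra A K]

/-- Truncation of a Hahn series strictly below `r`. -/
noncomputable def cutLT (f : HahnSeries ℝ K) (r : ℝ) : HahnSeries ℝ K where
  coeff := fun t => if t < r then f.coeff t else 0
  isPWO_support' := f.isPWO_support.mono (by
    intro t ht
    simp only [Function.mem_support] at ht ⊢
    intro h
    apply ht
    split <;> simp [h])

theorem cutLT_coeff (f : HahnSeries ℝ K) (r t : ℝ) :
    (cutLT f r).coeff t = if t < r then f.coeff t else 0 := rfl

/-- Truncation of a Hahn series at `≤ r`. -/
noncomputable def cutLE (f : HahnSeries ℝ K) (r : ℝ) : HahnSeries ℝ K where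
  coeff := fun t => if t ≤ r then f.coeff t else 0
  isPWO_support' := f.isPWO_support.mono (by
    intro t ht
    simp only [Function.mem_support] at ht ⊢
    intro h
    apply ht
    split <;> simp [h])

theorem cutLE_coeff (f : HahnSeries ℝ K) (r t : ℝ) :
    (cutLE f r).coeff t = if t ≤ r then f.coeff t else 0 := rfl

theorem goodW_pow {b : A} {L m : ℕ} {μ : ℝ} (hμ : 0 ≤ μ) {H : HahnSeries ℝ K}
    (hH : ∀ t : ℝ, EGood b (⌊(L : ℝ) * (t - μ)⌋₊ + m) (H.coeff t)) (hLB : SuppLB μ H)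
    (j : ℕ) :
    (∀ t : ℝ, EGood b (⌊(L : ℝ) * (t - j * μ)⌋₊ + j * m) ((H ^ j).coeff t)) ∧
      SuppLB ((j : ℝ) * μ) (H ^ j) := by
  induction j with
  | zero =>
    constructor
    · intro t
      rw [pow_zero, HahnSeries.coeff_one]
      split
      · exact (show EGood b 0 (1 : K) from ⟨1, by simp⟩).mono (Nat.zero_le _)
      · exact EGood.zero
    · simpa using SuppLB.one_
  | succ j ih =>
    obtain ⟨ih1, ih2⟩ := ih
    constructor
    · intro t
      rw [pow_succ, HahnSeries.coeff_mul]
      refine EGood.sum fun ij hij => ?_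
      rw [Finset.mem_addAntidiagonal] at hij
      obtain ⟨m1, m2, m3⟩ := hij
      have hx : (j : ℝ) * μ ≤ ij.1 := by
        by_contra hcon
        push_neg at hcon
        exact m1 (ih2 ij.1 hcon)
      have hy : μ ≤ ij.2 := by
        by_contra hcon
        push_neg at hcon
        exact m2 (hLB ij.2 hcon)
      refine ((ih1 ij.1).mul (hH ij.2)).mono ?_
      have hL0 : (0 : ℝ) ≤ (L : ℝ) := Nat.cast_nonneg L
      have hsup := nat_floor_superadd
        (mul_nonneg hL0 (by linarith : (0:ℝ) ≤ ij.1 - j * μ))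
        (mul_nonneg hL0 (by linarith : (0:ℝ) ≤ ij.2 - μ))
      have heq : (L : ℝ) * (ij.1 - j * μ) + (L : ℝ) * (ij.2 - μ)
          = (L : ℝ) * (t - (j + 1 : ℕ) * μ) := by
        rw [← m3]; push_cast; ring
      rw [heq] at hsup
      have : (j + 1) * m = j * m + m := by ring
      omega
    · intro t ht
      rw [pow_succ]
      refine (ih2.mul hLB) t ?_
      push_cast at ht ⊢
      linarith

theorem suppLB_natCast (k : ℕ) : SuppLB 0 ((k : HahnSeries ℝ K)) := by
  induction k with
  | zero => rw [Nat.cast_zero]; exact SuppLB.zero_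
  | succ k ih =>
    push_cast
    exact ih.add SuppLB.one_

end EisensteinAux3

/-- A Hahn series belongs to `A⟦x^{ℝ₊}⟧` (inside `K⟦x^{ℝ₊}⟧ ⊆ HahnSeries ℝ K`): its
support is contained in `ℝ₊` and meets every bounded interval in a finite set, and all its
coefficients come from `A`. -/
def IsGenPowerSeriesOver {A K : Type*} [CommRing A] [Field K] [Algebra A K]
    (f : HahnSeries ℝ K) : Prop :=
  (∀ s : ℝ, s < 0 → f.coeff s = 0) ∧
  (∀ r : ℝ, {s : ℝ | f.coeff s ≠ 0 ∧ s ≤ r}.Finite) ∧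
  ∀ s : ℝ, ∃ c : A, algebraMap A K c = f.coeff s

open Finset Polynomial in
set_option maxHeartbeats 1000000 in
/-- **Eisenstein's Theorem for generalized power series.** Let `A` be an integral domain
with fraction field `K`, and let `f = Σ_{s∈ℝ₊} a_s x^s ∈ K⟦x^{ℝ₊}⟧` be algebraic and
separable over `A⟦x^{ℝ₊}⟧`. Then there is a nonzero `a ∈ A` with `a^(⌈s⌉+1)·a_s ∈ A` for
all `s ∈ ℝ₊`. -/
theorem eisenstein_generalized
    {A K : Type*} [CommRing A] [IsDomain A] [Field K] [Algebra A K] [IsFractionRing A K]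
    (f : HahnSeries ℝ K)
    (hf₀ : ∀ s : ℝ, s < 0 → f.coeff s = 0)
    (hf₁ : ∀ r : ℝ, {s : ℝ | f.coeff s ≠ 0 ∧ s ≤ r}.Finite)
    (P : Polynomial (HahnSeries ℝ K)) (hP : P ≠ 0)
    (hPcoeff : ∀ i : ℕ, IsGenPowerSeriesOver (A := A) (P.coeff i))
    (hroot : Polynomial.eval f P = 0)
    (hsep : Polynomial.eval f (Polynomial.derivative P) ≠ 0) :
    ∃ a : A, a ≠ 0 ∧ ∀ s : ℝ, 0 ≤ s → ∃ c : A,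
      algebraMap A K c = algebraMap A K a ^ (⌈s⌉₊ + 1) * f.coeff s := by
  classical
  set n := P.natDegree with hn
  have hfLB : SuppLB 0 f := hf₀
  have hPLB : ∀ i, SuppLB 0 (P.coeff i) := fun i => (hPcoeff i).1
  have hdPLB : ∀ i, SuppLB 0 ((derivative P).coeff i) := by
    intro i
    rw [Polynomial.coeff_derivative]
    have hcn : SuppLB 0 (((i : HahnSeries ℝ K)) + 1) := by
      have := suppLB_natCast (K := K) (i + 1)
      push_cast at this
      exact this
    exact (hPLB (i + 1)).mul0 hcn
  set g := Polynomial.eval f (derivative P) with hgdef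
  have hgLB : SuppLB 0 g := suppLB_eval hdPLB hfLB
  have hgsupp : g.support.Nonempty := HahnSeries.support_nonempty_iff.mpr hsep
  set v := g.isWF_support.min hgsupp with hvdef
  set c := g.coeff v with hcdef
  have hc : c ≠ 0 := g.isWF_support.min_mem hgsupp
  have hvmin : ∀ e : ℝ, e < v → g.coeff e = 0 := by
    intro e he
    by_contra hcon
    exact absurd (g.isWF_support.min_le hgsupp hcon) (not_le.mpr he)
  have hv0 : (0 : ℝ) ≤ v := by
    by_contra hcon
    exact hc (hgLB v (by linarith))
  obtain ⟨η, hη0, hη1, hηgap⟩ :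
      ∃ η : ℝ, 0 < η ∧ η ≤ 1 ∧ ∀ e : ℝ, v < e → e < v + η → g.coeff e = 0 := by
    by_cases hT : {e : ℝ | e ∈ g.support ∧ v < e}.Nonempty
    · have hTwf : {e : ℝ | e ∈ g.support ∧ v < e}.IsWF :=
        g.isWF_support.mono fun e he => he.1
      have hwT := hTwf.min_mem hT
      refine ⟨min 1 (hTwf.min hT - v), ?_, min_le_left _ _, ?_⟩
      · have := hwT.2
        simp only [lt_min_iff]
        constructor <;> [exact one_pos; linarith]
      · intro e hve hlt
        by_contra hne0
        have heT : e ∈ {e : ℝ | e ∈ g.support ∧ v < e} := ⟨hne0, hve⟩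
        have hwe : hTwf.min hT ≤ e := hTwf.min_le hT heT
        have hmr := min_le_right 1 (hTwf.min hT - v)
        linarith
    · refine ⟨1, one_pos, le_refl 1, fun e hve hlt => ?_⟩
      by_contra hne0
      exact hT ⟨e, hne0, hve⟩
  set μ := v + 1 with hμdef
  have hμ0 : (0 : ℝ) ≤ μ := by rw [hμdef]; linarith
  have hvμ : v < μ := by rw [hμdef]; linarith
  set F₀ := cutLE f μ with hF₀def
  have hF₀LB : SuppLB 0 F₀ := by
    intro t ht
    rw [hF₀def, cutLE_coeff]
    split
    · exact hf₀ t ht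
    · rfl
  obtain ⟨b₀, hb₀⟩ := IsLocalization.exist_integer_multiples
    (nonZeroDivisors A) (hf₁ μ).toFinset f.coeff
  obtain ⟨γ, δ, hδ, hγδ⟩ := IsFractionRing.div_surjective (A := A) c
  have hγK : algebraMap A K γ ≠ 0 := by
    intro hcon
    rw [hcon, zero_div] at hγδ
    exact hc hγδ.symm
  have hγ0 : γ ≠ 0 := fun hcon => hγK (by rw [hcon, map_zero])
  have hδK : algebraMap A K δ ≠ 0 :=
    IsFractionRing.to_map_ne_zero_of_mem_nonZeroDivisors hδ
  set B := (b₀ : A) * γ with hBdef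
  have hb₀0 : (b₀ : A) ≠ 0 := nonZeroDivisors.coe_ne_zero b₀
  have hB0 : B ≠ 0 := mul_ne_zero hb₀0 hγ0
  have hBcinv : ∃ e : A, algebraMap A K e = algebraMap A K B * c⁻¹ := by
    refine ⟨(b₀ : A) * δ, ?_⟩
    rw [hBdef, map_mul, map_mul, ← hγδ]
    field_simp
  have hinit : ∀ t : ℝ, f.coeff t ≠ 0 → t ≤ μ → EGood B 1 (f.coeff t) := by
    intro t h0 htμ
    have hmem : t ∈ (hf₁ μ).toFinset := by
      rw [Set.Finite.mem_toFinset]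
      exact ⟨h0, htμ⟩
    obtain ⟨e, he⟩ := hb₀ t hmem
    rw [Algebra.smul_def] at he
    refine ⟨γ * e, ?_⟩
    rw [map_mul, he, pow_one, hBdef, map_mul]
    ring
  have hF₀good : GoodC B 1 F₀ := by
    intro t
    rw [hF₀def, cutLE_coeff]
    split
    · rename_i h
      by_cases h0 : f.coeff t = 0
      · rw [h0]; exact EGood.zero
      · exact hinit t h0 h
    · exact EGood.zero
  have hPgood : ∀ i, GoodC B 0 (P.coeff i) := by
    intro i t
    obtain ⟨e, he⟩ := (hPcoeff i).2.2 t
    exact ⟨e, by rw [he, pow_zero, one_mul]⟩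
  set m := n + 1 with hmdef
  set L := 2 * n + 2 + ⌈((n : ℝ) + 1) / η⌉₊ with hLdef
  have hL0 : (0 : ℝ) ≤ (L : ℝ) := Nat.cast_nonneg L
  have hLη : (n : ℝ) + 1 ≤ (L : ℝ) * η := by
    have h1 : ((n : ℝ) + 1) / η ≤ (⌈((n : ℝ) + 1) / η⌉₊ : ℝ) := Nat.le_ceil _
    have h2 : (⌈((n : ℝ) + 1) / η⌉₊ : ℝ) ≤ (L : ℝ) := by
      rw [hLdef]
      push_cast
      linarith [Nat.cast_nonneg (α := ℝ) n]
    have h3 : (n : ℝ) + 1 ≤ (⌈((n : ℝ) + 1) / η⌉₊ : ℝ) * η :=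
      (div_le_iff₀ hη0).mp h1
    nlinarith
  have hL2 : 2 * m ≤ L := by omega
  set Ψ : ℕ → HahnSeries ℝ K := fun j => (Polynomial.taylor F₀ P).coeff j with hΨdef
  have hΨgood : ∀ j, GoodC B n (Ψ j) := by
    intro j
    simp only [hΨdef, Polynomial.taylor_coeff]
    refine goodC_eval ?_ hF₀good ?_
    · intro i t
      rw [Polynomial.hasseDeriv_coeff, ← nsmul_eq_mul]
      exact ((hPgood (i + j)).nsmul _) t
    · exact le_trans (Polynomial.natDegree_hasseDeriv_le P j) (Nat.sub_le _ _)
  have hΨLB : ∀ j, SuppLB 0 (Ψ j) := by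
    intro j
    simp only [hΨdef, Polynomial.taylor_coeff]
    refine suppLB_eval ?_ hF₀LB
    intro i
    rw [Polynomial.hasseDeriv_coeff, ← nsmul_eq_mul]
    exact (hPLB (i + j)).nsmul _
  have hΨ1eq : ∀ e : ℝ, e ≤ μ → (Ψ 1).coeff e = g.coeff e := by
    have h1 : Ψ 1 = Polynomial.eval F₀ (derivative P) := by
      simp only [hΨdef, Polynomial.taylor_coeff, Polynomial.hasseDeriv_one']
    intro e he
    have hdd := edd_mul (derivative P) f F₀
    have hsub : SuppLBs μ (f - F₀) := by
      intro t ht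
      rw [HahnSeries.coeff_sub, hF₀def, cutLE_coeff, if_pos ht, sub_self]
    have hz : (g - Ψ 1).coeff e = 0 := by
      rw [h1, hgdef, hdd]
      exact (hsub.mul0 (suppLB_edd hdPLB hfLB hF₀LB)) e he
    rw [HahnSeries.coeff_sub] at hz
    exact (sub_eq_zero.mp hz).symm
  have hΨ1gap : ∀ e : ℝ, v < e → e < v + η → (Ψ 1).coeff e = 0 := by
    intro e h1 h2
    rw [hΨ1eq e (by rw [hμdef]; linarith)]
    exact hηgap e h1 h2
  -- the main induction
  have CL : ∀ N : ℕ, ∀ s : ℝ, (hf₁ s).toFinset.card ≤ N →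
      EGood B (⌊(L : ℝ) * (s - μ)⌋₊ + m) (f.coeff s) := by
    intro N
    induction N with
    | zero =>
      intro s hcard
      by_cases h0 : f.coeff s = 0
      · rw [h0]; exact EGood.zero
      · exfalso
        have hmem : s ∈ (hf₁ s).toFinset := by
          rw [Set.Finite.mem_toFinset]; exact ⟨h0, le_refl s⟩
        have := Finset.card_pos.mpr ⟨s, hmem⟩
        omega
    | succ N ih =>
      intro s hcard
      by_cases h0 : f.coeff s = 0
      · rw [h0]; exact EGood.zero
      by_cases hsμ : s ≤ μ
      · have hα : ⌊(L : ℝ) * (s - μ)⌋₊ = 0 :=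
          Nat.floor_of_nonpos (mul_nonpos_iff.mpr (Or.inl ⟨hL0, by linarith⟩))
        rw [hα]
        exact (hinit s h0 hsμ).mono (by omega)
      · push_neg at hsμ
        have hIH : ∀ t : ℝ, t < s →
            EGood B (⌊(L : ℝ) * (t - μ)⌋₊ + m) (f.coeff t) := by
          intro t ht
          by_cases ht0 : f.coeff t = 0
          · rw [ht0]; exact EGood.zero
          refine ih t ?_
          have hss : (hf₁ t).toFinset ⊂ (hf₁ s).toFinset := by
            constructor
            · intro u hu
              rw [Set.Finite.mem_toFinset] at hu ⊢
              exact ⟨hu.1, by linarith [hu.2]⟩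
            · intro hcon
              have hsmem : s ∈ (hf₁ s).toFinset := by
                rw [Set.Finite.mem_toFinset]; exact ⟨h0, le_refl s⟩
              have := hcon hsmem
              rw [Set.Finite.mem_toFinset] at this
              linarith [this.2]
          have := Finset.card_lt_card hss
          omega
        set F := cutLT f s with hFdef
        set H := F - F₀ with hHdef
        have hFLB : SuppLB 0 F := by
          intro t ht
          rw [hFdef, cutLT_coeff]
          split
          · exact hf₀ t ht
          · rfl
        have hHzero : ∀ t : ℝ, t ≤ μ → H.coeff t = 0 := by
          intro t ht
          rw [hHdef, HahnSeries.coeff_sub, hFdef, cutLT_coeff, hF₀def, cutLE_coeff,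
            if_pos (by linarith : t < s), if_pos ht, sub_self]
        have hHLB : SuppLB μ H := fun t ht => hHzero t (le_of_lt ht)
        have hHub : ∀ t : ℝ, s ≤ t → H.coeff t = 0 := by
          intro t ht
          rw [hHdef, HahnSeries.coeff_sub, hFdef, cutLT_coeff, hF₀def, cutLE_coeff,
            if_neg (by linarith : ¬ t < s), if_neg (by linarith : ¬ t ≤ μ), sub_self]
        have hHgood : ∀ t : ℝ, EGood B (⌊(L : ℝ) * (t - μ)⌋₊ + m) (H.coeff t) := by
          intro t
          rcases le_or_gt t μ with h | h
          · rw [hHzero t h]; exact EGood.zero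
          rcases lt_or_ge t s with h2 | h2
          · have heq : H.coeff t = f.coeff t := by
              rw [hHdef, HahnSeries.coeff_sub, hFdef, cutLT_coeff, hF₀def, cutLE_coeff,
                if_pos h2, if_neg (by linarith), sub_zero]
            rw [heq]
            exact hIH t h2
          · rw [hHub t h2]; exact EGood.zero
        have goodW := goodW_pow (b := B) (L := L) (m := m) hμ0 hHgood hHLB
        have hFs : F.coeff s = 0 := by rw [hFdef, cutLT_coeff, if_neg (lt_irrefl s)]
        have hfF : ∀ t : ℝ, t < s → (f - F).coeff t = 0 := by
          intro t ht
          rw [HahnSeries.coeff_sub, hFdef, cutLT_coeff, if_pos ht, sub_self]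
        have hGeq : ∀ e : ℝ, e ≤ μ → (edd P f F).coeff e = g.coeff e := by
          obtain ⟨W, hWLB, hW⟩ := edd_diff P f F hPLB hfLB hFLB
          intro e he
          have hsub : SuppLBs μ (F - f) := by
            intro t ht
            rw [HahnSeries.coeff_sub, hFdef, cutLT_coeff, if_pos (by linarith), sub_self]
          have hz : (edd P f F - edd P f f).coeff e = 0 := by
            rw [hW]
            exact (hsub.mul0 hWLB) e he
          rw [HahnSeries.coeff_sub, edd_self, ← hgdef] at hz
          exact sub_eq_zero.mp hz
        have heddLB : SuppLB 0 (edd P f F) := suppLB_edd hPLB hfLB hFLB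
        have hkey : f.coeff s * c = -((Polynomial.eval F P).coeff (s + v)) := by
          have h1 : Polynomial.eval f P - Polynomial.eval F P = (f - F) * edd P f F :=
            edd_mul P f F
          rw [hroot, zero_sub] at h1
          have h2 : ((f - F) * edd P f F).coeff (s + v) = f.coeff s * c := by
            rw [HahnSeries.coeff_mul]
            have hmem : ((s, v) : ℝ × ℝ) ∈ Finset.antidiagonal
                (f - F).isPWO_support (edd P f F).isPWO_support (s + v) := by
              rw [Finset.mem_addAntidiagonal]
              refine ⟨?_, ?_, rfl⟩
              · show (f - F).coeff s ≠ 0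
                rw [HahnSeries.coeff_sub, hFs, sub_zero]
                exact h0
              · show (edd P f F).coeff v ≠ 0
                rw [hGeq v (le_of_lt hvμ)]
                exact hc
            rw [Finset.sum_eq_single_of_mem _ hmem ?_]
            · rw [HahnSeries.coeff_sub, hFs, sub_zero, hGeq v (le_of_lt hvμ), ← hcdef]
            · intro ij hij hne
              rw [Finset.mem_addAntidiagonal] at hij
              obtain ⟨m1, m2, m3⟩ := hij
              have hge : s ≤ ij.1 := by
                by_contra hcon
                push_neg at hcon
                exact m1 (hfF ij.1 hcon)
              exfalso
              rcases eq_or_lt_of_le hge with heq | hlt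
              · apply hne
                have h2v : ij.2 = v := by
                  rw [← heq] at m3
                  linarith
                exact Prod.ext heq.symm h2v
              · have hij2 : ij.2 < v := by linarith
                rcases lt_or_ge ij.2 0 with hneg | hpos
                · exact m2 (heddLB ij.2 hneg)
                · exact m2 (by rw [hGeq ij.2 (by linarith)]; exact hvmin ij.2 hij2)
          calc f.coeff s * c = ((f - F) * edd P f F).coeff (s + v) := h2.symm
            _ = (-(Polynomial.eval F P)).coeff (s + v) := by rw [← h1]
            _ = -((Polynomial.eval F P).coeff (s + v)) := by
                rw [HahnSeries.coeff_neg]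
        have hXgood : EGood B (⌊(L : ℝ) * (s - μ)⌋₊ + n)
            ((Polynomial.eval F P).coeff (s + v)) := by
          have hFHF : F = H + F₀ := by rw [hHdef]; ring
          have hev : Polynomial.eval F P = ∑ j ∈ Finset.range (n + 1), Ψ j * H ^ j := by
            rw [hFHF, ← Polynomial.taylor_eval F₀ P H,
              Polynomial.eval_eq_sum_range'
                (by rw [Polynomial.natDegree_taylor]
                    exact Nat.lt_succ_of_le (le_of_eq hn.symm)) H]
          rw [hev, hahn_coeff_sum]
          refine EGood.sum fun j hj => ?_
          rw [HahnSeries.coeff_mul]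
          refine EGood.sum fun ij hij => ?_
          rw [Finset.mem_addAntidiagonal] at hij
          obtain ⟨m1, m2, m3⟩ := hij
          have he0 : 0 ≤ ij.1 := by
            by_contra hcon
            push_neg at hcon
            exact m1 ((hΨLB j) ij.1 hcon)
          have hyle : ij.2 ≤ s + v := by linarith
          have hyj : (j : ℝ) * μ ≤ ij.2 := by
            by_contra hcon
            push_neg at hcon
            exact m2 ((goodW j).2 ij.2 hcon)
          refine ((hΨgood j ij.1).mul ((goodW j).1 ij.2)).mono ?_
          have hmain : ⌊(L : ℝ) * (ij.2 - (j : ℝ) * μ)⌋₊ + j * m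
              ≤ ⌊(L : ℝ) * (s - μ)⌋₊ := by
            match j with
            | 0 =>
              have hy0 : ij.2 = 0 := by
                by_contra hcon
                apply m2
                rw [pow_zero, HahnSeries.coeff_one, if_neg hcon]
              rw [hy0]
              simp
            | 1 =>
              have hyμ : μ ≤ ij.2 := by
                have := hyj
                push_cast at this
                linarith
              have hy2s : ij.2 < s := by
                by_contra hc2
                push_neg at hc2
                exact m2 (by rw [pow_one]; exact hHub ij.2 hc2)
              have hys : ij.2 ≤ s - η := by
                by_contra hcon
                push_neg at hcon
                apply m1
                refine hΨ1gap ij.1 (by linarith) (by linarith)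
              refine nat_floor_add_nat_le
                (mul_nonneg hL0 (by push_cast; linarith)) ?_
              have hse : η ≤ s - ij.2 := by linarith
              have hmul : (L : ℝ) * η ≤ (L : ℝ) * (s - ij.2) :=
                mul_le_mul_of_nonneg_left hse hL0
              have hmcast : ((1 * m : ℕ) : ℝ) = (n : ℝ) + 1 := by
                rw [hmdef]; push_cast; ring
              rw [hmcast]
              push_cast
              nlinarith
            | (j + 2) =>
              have hyj' : ((j : ℝ) + 2) * μ ≤ ij.2 := by
                have := hyj; push_cast at this; linarith
              refine nat_floor_add_nat_le
                (mul_nonneg hL0 (by push_cast; linarith)) ?_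
              have hL2' : 2 * (m : ℝ) ≤ (L : ℝ) := by exact_mod_cast hL2
              have hm0 : (0 : ℝ) ≤ (m : ℝ) := Nat.cast_nonneg m
              have hj0 : (0 : ℝ) ≤ (j : ℝ) := Nat.cast_nonneg j
              have hμv : μ = v + 1 := hμdef
              have e0 : (L : ℝ) * (s - μ) - (L : ℝ) * (ij.2 - ((j : ℝ) + 2) * μ)
                  = (L : ℝ) * (s - ij.2 + ((j : ℝ) + 1) * μ) := by ring
              have e2 : (j : ℝ) + 1 ≤ s - ij.2 + ((j : ℝ) + 1) * μ := by
                rw [hμv]; nlinarith [mul_nonneg hj0 hv0]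
              have e3 : (L : ℝ) * ((j : ℝ) + 1) ≤ (L : ℝ) * (s - ij.2 + ((j : ℝ) + 1) * μ) :=
                mul_le_mul_of_nonneg_left e2 hL0
              have e4 : 2 * (m : ℝ) * ((j : ℝ) + 1) ≤ (L : ℝ) * ((j : ℝ) + 1) :=
                mul_le_mul_of_nonneg_right hL2' (by linarith)
              have e5 : (m : ℝ) * ((j : ℝ) + 2) ≤ 2 * (m : ℝ) * ((j : ℝ) + 1) := by nlinarith
              have hmeq : (m : ℝ) = (n : ℝ) + 1 := by rw [hmdef]; push_cast; ring
              have e6 : ((j : ℝ) + 2) * ((n : ℝ) + 1) = (m : ℝ) * ((j : ℝ) + 2) := by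
                rw [hmeq]; ring
              push_cast
              linarith [e6]
          omega
        have hfs : f.coeff s = -((Polynomial.eval F P).coeff (s + v)) * c⁻¹ := by
          rw [eq_mul_inv_iff_mul_eq₀ hc]
          exact hkey
        obtain ⟨c₁, hc₁⟩ := hXgood
        obtain ⟨e, he⟩ := hBcinv
        have hαs : ⌊(L : ℝ) * (s - μ)⌋₊ + m = (⌊(L : ℝ) * (s - μ)⌋₊ + n) + 1 := by
          omega
        rw [hαs]
        refine ⟨-(e * c₁), ?_⟩
        rw [map_neg, map_mul, he, hc₁, hfs, pow_succ]
        ring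
  refine ⟨B ^ (L + m), pow_ne_zero _ hB0, ?_⟩
  intro s hs
  have hcl := CL ((hf₁ s).toFinset.card) s (le_refl _)
  have hle : ⌊(L : ℝ) * (s - μ)⌋₊ + m ≤ (L + m) * (⌈s⌉₊ + 1) := by
    have h1 : (L : ℝ) * (s - μ) ≤ (L : ℝ) * s := by nlinarith
    have h2 : (L : ℝ) * s ≤ ((L * ⌈s⌉₊ : ℕ) : ℝ) := by
      push_cast
      have := Nat.le_ceil s
      nlinarith
    have h3 : ⌊(L : ℝ) * (s - μ)⌋₊ ≤ L * ⌈s⌉₊ := by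
      calc ⌊(L : ℝ) * (s - μ)⌋₊ ≤ ⌊((L * ⌈s⌉₊ : ℕ) : ℝ)⌋₊ :=
            Nat.floor_mono (le_trans h1 h2)
        _ = L * ⌈s⌉₊ := Nat.floor_natCast _
    nlinarith [h3]
  obtain ⟨cc, hcc⟩ := hcl.mono hle
  refine ⟨cc, ?_⟩
  rw [hcc, map_pow, ← pow_mul]
end

section
/- Let ω₁,…,ωₙ be positive real numbers that are linearly independent over ℚ. The map φ : K⟦x₁,…,xₙ⟧ → K⟦t^{ℝ₊}⟧ defined by φ(Σ_α a_α x^α) = Σ_α a_α t^{⟨α,ω⟩} is an injective ring homomorphism, where ⟨α,ω⟩ = α₁ω₁ + ⋯ + αₙωₙ. -/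
noncomputable section AuxHahnWt

variable {K : Type*} [Field K] {n : ℕ}

/-- The weight additive monoid hom `α ↦ ∑ αᵢ ωᵢ`. -/
def auxWt (ω : Fin n → ℝ) : (Fin n →₀ ℕ) →+ ℝ where
  toFun α := ∑ i, (α i : ℝ) * ω i
  map_zero' := by simp
  map_add' α β := by
    simp only [Finsupp.coe_add, Pi.add_apply, Nat.cast_add, add_mul]
    rw [Finset.sum_add_distrib]

theorem auxWt_inj (ω : Fin n → ℝ) (hind : LinearIndependent ℚ ω) :
    Function.Injective (auxWt ω) := by
  intro α β h
  have key : ∀ i, ((α i : ℚ) - β i) = 0 := by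
    apply Fintype.linearIndependent_iff.mp hind (fun i => (α i : ℚ) - (β i : ℚ))
    have : ∑ i, (((α i : ℚ) - β i) • ω i) = auxWt ω α - auxWt ω β := by
      rw [auxWt, AddMonoidHom.coe_mk, ZeroHom.coe_mk, ← Finset.sum_sub_distrib]
      apply Finset.sum_congr rfl
      intro i _
      rw [Rat.smul_def]
      push_cast
      ring
    rw [this, h, sub_self]
  ext i
  have := key i
  have : (α i : ℚ) = β i := by linarith
  exact_mod_cast this

theorem auxWt_finite (ω : Fin n → ℝ) (hpos : ∀ i, 0 < ω i) (r : ℝ) :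
    {α : Fin n →₀ ℕ | auxWt ω α ≤ r}.Finite := by
  classical
  have hsub : {α : Fin n →₀ ℕ | auxWt ω α ≤ r} ⊆
      (Finsupp.equivFunOnFinite) ⁻¹' (Set.pi Set.univ fun i => Set.Iic (⌊r / ω i⌋₊)) := by
    intro α hα
    intro i _
    have hterm : (α i : ℝ) * ω i ≤ r := by
      refine le_trans ?_ hα
      refine Finset.single_le_sum (f := fun j => (α j : ℝ) * ω j) ?_ (Finset.mem_univ i)
      intro j _
      exact mul_nonneg (Nat.cast_nonneg _) (hpos j).le
    have : (α i : ℝ) ≤ r / ω i := (le_div_iff₀ (hpos i)).mpr hterm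
    exact Nat.le_floor this
  exact Set.Finite.subset (Set.Finite.preimage
    (Equiv.injective _).injOn (Set.Finite.pi fun i => Set.finite_Iic _)) hsub

theorem auxWt_range_isPWO (ω : Fin n → ℝ) (hpos : ∀ i, 0 < ω i) :
    (Set.range (auxWt ω)).IsPWO := by
  rw [Set.isPWO_iff_isWF, Set.isWF_iff_no_descending_seq]
  intro f hf hmem
  have hchoice : ∀ k : ℕ, ∃ α : Fin n →₀ ℕ, auxWt ω α = f k := fun k => hmem k
  choose g hg using hchoice
  have hginj : Function.Injective g := by
    intro a b hab
    exact hf.injective (by rw [← hg a, ← hg b, hab])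
  have hmem' : ∀ k, g k ∈ {α : Fin n →₀ ℕ | auxWt ω α ≤ f 0} := by
    intro k
    simp only [Set.mem_setOf_eq, hg]
    exact hf.antitone (Nat.zero_le k)
  exact (Set.infinite_of_injective_forall_mem hginj hmem') (auxWt_finite ω hpos (f 0))


/-- Push a Hahn series on `Fin n →₀ ℕ` forward along the weight map. -/
def auxF (ω : Fin n → ℝ) (hpos : ∀ i, 0 < ω i) (x : HahnSeries (Fin n →₀ ℕ) K) : HahnSeries ℝ K where
  coeff := Function.extend (auxWt ω) x.coeff 0
  isPWO_support' := by
    refine (auxWt_range_isPWO ω hpos).mono ?_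
    intro s hs
    by_contra hsr
    exact hs (Function.extend_apply' _ _ _ (fun ⟨a, ha⟩ => hsr ⟨a, ha⟩))

theorem auxF_coeff_wt (ω : Fin n → ℝ) (hpos : ∀ i, 0 < ω i) (hind : LinearIndependent ℚ ω) (x : HahnSeries (Fin n →₀ ℕ) K) (α : Fin n →₀ ℕ) :
    (auxF ω hpos x).coeff (auxWt ω α) = x.coeff α :=
  (auxWt_inj ω hind).extend_apply _ _ _

theorem auxF_coeff_of_not_mem (ω : Fin n → ℝ) (hpos : ∀ i, 0 < ω i) (x : HahnSeries (Fin n →₀ ℕ) K) (s : ℝ)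
    (hs : s ∉ Set.range (auxWt ω)) : (auxF ω hpos x).coeff s = 0 :=
  Function.extend_apply' _ _ _ (fun ⟨a, ha⟩ => hs ⟨a, ha⟩)

theorem auxF_support (ω : Fin n → ℝ) (hpos : ∀ i, 0 < ω i) (hind : LinearIndependent ℚ ω) (x : HahnSeries (Fin n →₀ ℕ) K) :
    (auxF ω hpos x).support = auxWt ω '' x.support := by
  ext s
  constructor
  · intro hs
    by_cases h : s ∈ Set.range (auxWt ω)
    · obtain ⟨α, rfl⟩ := h
      exact ⟨α, by rwa [HahnSeries.mem_support, auxF_coeff_wt ω hpos hind] at hs, rfl⟩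
    · exact absurd (auxF_coeff_of_not_mem ω hpos x s h) hs
  · rintro ⟨α, hα, rfl⟩
    rwa [HahnSeries.mem_support, auxF_coeff_wt ω hpos hind]

/-- The pushforward as a ring hom. -/
def auxHom (ω : Fin n → ℝ) (hpos : ∀ i, 0 < ω i) (hind : LinearIndependent ℚ ω) : HahnSeries (Fin n →₀ ℕ) K →+* HahnSeries ℝ K where
  toFun := auxF ω hpos
  map_zero' := by
    show auxF ω hpos 0 = 0
    ext s
    by_cases h : s ∈ Set.range (auxWt ω)
    · obtain ⟨α, rfl⟩ := h
      simp [auxF_coeff_wt ω hpos hind, HahnSeries.coeff_zero]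
    · simp [auxF_coeff_of_not_mem ω hpos _ s h]
  map_one' := by
    show auxF ω hpos 1 = 1
    ext s
    by_cases h : s ∈ Set.range (auxWt ω)
    · obtain ⟨α, rfl⟩ := h
      rw [auxF_coeff_wt ω hpos hind, HahnSeries.coeff_one, HahnSeries.coeff_one]
      have : auxWt ω α = 0 ↔ α = 0 := by
        constructor
        · intro hh
          exact auxWt_inj ω hind (by rw [hh, map_zero])
        · rintro rfl; exact map_zero _
      simp [this]
    · rw [auxF_coeff_of_not_mem ω hpos _ s h, HahnSeries.coeff_one,
        if_neg (fun hs0 => h ⟨0, by rw [map_zero, hs0]⟩)]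
  map_add' x y := by
    show auxF ω hpos (x + y) = auxF ω hpos x + auxF ω hpos y
    ext s
    by_cases h : s ∈ Set.range (auxWt ω)
    · obtain ⟨α, rfl⟩ := h
      simp [auxF_coeff_wt ω hpos hind, HahnSeries.coeff_add]
    · simp [auxF_coeff_of_not_mem ω hpos _ s h, HahnSeries.coeff_add]
  map_mul' x y := by
    show auxF ω hpos (x * y) = auxF ω hpos x * auxF ω hpos y
    ext s
    by_cases h : s ∈ Set.range (auxWt ω)
    · obtain ⟨γ, rfl⟩ := h
      rw [auxF_coeff_wt ω hpos hind, HahnSeries.coeff_mul, HahnSeries.coeff_mul]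
      refine Finset.sum_bij (fun p _ => (auxWt ω p.1, auxWt ω p.2)) ?_ ?_ ?_ ?_
      · rintro ⟨a, b⟩ hp
        rw [Finset.mem_addAntidiagonal] at hp ⊢
        obtain ⟨h1, h2, h3⟩ := hp
        refine ⟨?_, ?_, by rw [← map_add, h3]⟩
        · rw [HahnSeries.mem_support, auxF_coeff_wt ω hpos hind]; exact h1
        · rw [HahnSeries.mem_support, auxF_coeff_wt ω hpos hind]; exact h2
      · rintro ⟨a, b⟩ _ ⟨c, d⟩ _ hpq
        have h1 := auxWt_inj ω hind (congrArg Prod.fst hpq)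
        have h2 := auxWt_inj ω hind (congrArg Prod.snd hpq)
        simp_all
      · rintro ⟨u, v⟩ hq
        rw [Finset.mem_addAntidiagonal] at hq
        obtain ⟨h1, h2, h3⟩ := hq
        obtain ⟨a, ha, rfl⟩ : u ∈ auxWt ω '' x.support := by
          rw [← auxF_support ω hpos hind]; exact h1
        obtain ⟨b, hb, rfl⟩ : v ∈ auxWt ω '' y.support := by
          rw [← auxF_support ω hpos hind]; exact h2
        have hab : a + b = γ := auxWt_inj ω hind (by rw [map_add]; exact h3)
        exact ⟨(a, b), Finset.mem_addAntidiagonal.mpr ⟨ha, hb, hab⟩, rfl⟩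
      · rintro ⟨a, b⟩ _
        rw [auxF_coeff_wt ω hpos hind, auxF_coeff_wt ω hpos hind]
    · rw [auxF_coeff_of_not_mem ω hpos _ s h, HahnSeries.coeff_mul]
      refine (Finset.sum_eq_zero ?_).symm
      rintro ⟨u, v⟩ hq
      rw [Finset.mem_addAntidiagonal] at hq
      obtain ⟨h1, h2, h3⟩ := hq
      obtain ⟨a, -, rfl⟩ : u ∈ auxWt ω '' x.support := by
        rw [← auxF_support ω hpos hind]; exact h1
      obtain ⟨b, -, rfl⟩ : v ∈ auxWt ω '' y.support := by
        rw [← auxF_support ω hpos hind]; exact h2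
      exact absurd (h3 ▸ ⟨a + b, map_add _ a b⟩) h

end AuxHahnWt

/-- Let `ω₁,…,ωₙ` be positive reals, linearly independent over `ℚ`. The map
`φ(Σ_α a_α x^α) = Σ_α a_α t^⟨α,ω⟩` is an injective ring homomorphism from
`K⟦x₁,…,xₙ⟧` to the ring of generalized power series `K⟦t^{ℝ₊}⟧` (Hahn series over `ℝ`). -/
theorem exists_injective_ringHom_mvPowerSeries_to_hahnSeries
    (K : Type*) [Field K] (n : ℕ) (ω : Fin n → ℝ)
    (hpos : ∀ i, 0 < ω i) (hind : LinearIndependent ℚ ω) :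
    ∃ φ : MvPowerSeries (Fin n) K →+* HahnSeries ℝ K,
      Function.Injective φ ∧
      (∀ (f : MvPowerSeries (Fin n) K) (α : Fin n →₀ ℕ),
        (φ f).coeff (∑ i, (α i : ℝ) * ω i) = MvPowerSeries.coeff α f) ∧
      (∀ (f : MvPowerSeries (Fin n) K) (s : ℝ),
        (∀ α : Fin n →₀ ℕ, s ≠ ∑ i, (α i : ℝ) * ω i) → (φ f).coeff s = 0) := by
  classical
  set e : MvPowerSeries (Fin n) K ≃+* HahnSeries (Fin n →₀ ℕ) K :=
    (HahnSeries.toMvPowerSeries (σ := Fin n) (R := K)).symm with he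
  refine ⟨(auxHom ω hpos hind).comp e.toRingHom, ?_, ?_, ?_⟩
  · intro a b hab
    apply e.injective
    ext α
    have := congrArg (fun z : HahnSeries ℝ K => z.coeff (auxWt ω α)) hab
    simpa [auxHom, RingHom.comp_apply, auxF_coeff_wt ω hpos hind] using this
  · intro f α
    have hs : (∑ i, (α i : ℝ) * ω i) = auxWt ω α := rfl
    rw [hs]
    show (auxF ω hpos (e f)).coeff (auxWt ω α) = _
    rw [auxF_coeff_wt ω hpos hind]
    exact HahnSeries.coeff_toMvPowerSeries_symm
  · intro f s hs
    show (auxF ω hpos (e f)).coeff s = 0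
    exact auxF_coeff_of_not_mem ω hpos _ s (fun ⟨α, hα⟩ => hs α hα.symm)
end

section
/- For n ≥ 2, the field ℂ((x₁,…,xₙ)) of fractions of ℂ⟦x₁,…,xₙ⟧ is not complete with respect to the (x)-adic norm |f/g| = e^{−(ord f − ord g)}; concretely, the sequence of partial sums of Σ_{ℓ≥1} x₁^{ℓ!}/x₂^{ℓ} is Cauchy but has no limit in ℂ((x₁,x₂)). -/
open MvPowerSeries Finsupp

/-- The monomial exponent `x₀^a x₁^b` as a finitely supported function on `Fin 2`. -/
noncomputable def monExp (a b : ℕ) : Fin 2 →₀ ℕ := Finsupp.single 0 a + Finsupp.single 1 b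

lemma monExp_apply0 (a b : ℕ) : monExp a b 0 = a := by simp [monExp]

lemma monExp_apply1 (a b : ℕ) : monExp a b 1 = b := by simp [monExp, Finsupp.single_apply]

lemma eq_monExp (d : Fin 2 →₀ ℕ) : d = monExp (d 0) (d 1) := by
  ext i; fin_cases i <;> simp [monExp, Finsupp.single_apply]

lemma degree_monExp (a b : ℕ) : Finsupp.degree (monExp a b) = a + b := by
  rw [Finsupp.degree_apply, Finset.sum_subset (Finset.subset_univ _)
    (fun i _ hi => Finsupp.notMem_support_iff.mp hi), Fin.sum_univ_two, monExp_apply0,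
    monExp_apply1]

lemma monExp_le_iff {a b a' b' : ℕ} : monExp a b ≤ monExp a' b' ↔ a ≤ a' ∧ b ≤ b' := by
  constructor
  · intro h
    exact ⟨by simpa [monExp_apply0] using (Finsupp.le_def.mp h) 0,
      by simpa [monExp_apply1] using (Finsupp.le_def.mp h) 1⟩
  · rintro ⟨h1, h2⟩
    rw [Finsupp.le_def]
    intro i; fin_cases i <;> simpa [monExp_apply0, monExp_apply1]

lemma monExp_sub (a b a' b' : ℕ) : monExp a b - monExp a' b' = monExp (a - a') (b - b') := by
  ext i; fin_cases i <;> simp [Finsupp.tsub_apply, monExp_apply0, monExp_apply1]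

lemma X0X1pow (A B : ℕ) :
    (X 0 : MvPowerSeries (Fin 2) ℂ) ^ A * (X 1) ^ B = monomial (monExp A B) 1 := by
  rw [X_pow_eq, X_pow_eq, monomial_mul_monomial, one_mul]; rfl

lemma fact_ge {N ℓ : ℕ} (h : N + 2 ≤ ℓ) : ℓ + N ≤ Nat.factorial ℓ := by
  obtain ⟨k, rfl⟩ : ∃ k, ℓ = k + 1 := ⟨ℓ - 1, by omega⟩
  have h1 : k ≤ Nat.factorial k := Nat.self_le_factorial _
  have h2 : (k + 1) * k ≤ (k + 1) * Nat.factorial k := Nat.mul_le_mul_left _ h1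
  rw [← Nat.factorial_succ] at h2
  nlinarith

open MvPowerSeries in
/-- **`ℂ((x₁,x₂))` is not complete for the `(x)`-adic norm.** The partial sums of
`Σ_{ℓ≥1} x₁^{ℓ!}/x₂^ℓ` form a Cauchy sequence with no limit in `ℂ((x₁,x₂))`.  Writing the
`m`-th partial sum as `S m / x₂^m` with `S m = Σ_{ℓ=1}^m x₁^{ℓ!} x₂^{m−ℓ} ∈ ℂ⟦x₁,x₂⟧`,
Cauchyness says `ord(S m' · x₂^m − S m · x₂^m') − (m + m') → ∞`, and a limit `f/g`
(`g ≠ 0`) would satisfy `ord(f·x₂^m − g·S m) − ord g − m → ∞`; the latter is impossible. -/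
theorem field_of_power_series_not_complete
    (S : ℕ → MvPowerSeries (Fin 2) ℂ)
    (hS : ∀ m, S m = ∑ ℓ ∈ Finset.Icc 1 m,
      (MvPowerSeries.X 0) ^ (Nat.factorial ℓ) * (MvPowerSeries.X 1) ^ (m - ℓ)) :
    (∀ N : ℕ, ∃ M : ℕ, ∀ m m' : ℕ, M ≤ m → m ≤ m' →
      ((m + m' + N : ℕ) : ℕ∞) ≤
        MvPowerSeries.order (S m' * (MvPowerSeries.X 1) ^ m - S m * (MvPowerSeries.X 1) ^ m')) ∧
    ¬ ∃ f g : MvPowerSeries (Fin 2) ℂ, g ≠ 0 ∧ ∀ N : ℕ, ∃ M : ℕ, ∀ m : ℕ, M ≤ m →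
      MvPowerSeries.order g + ((m + N : ℕ) : ℕ∞) ≤
        MvPowerSeries.order (f * (MvPowerSeries.X 1) ^ m - g * S m) := by
  constructor
  · -- Cauchy part
    intro N
    refine ⟨N + 2, fun m m' hMm hmm' => ?_⟩
    have key : S m' * (X 1) ^ m - S m * (X 1) ^ m'
        = ∑ ℓ ∈ Finset.Ioc m m', monomial (monExp (Nat.factorial ℓ) (m + m' - ℓ)) 1 := by
      have h1 : S m' * (X 1 : MvPowerSeries (Fin 2) ℂ) ^ m
          = ∑ ℓ ∈ Finset.Icc 1 m', monomial (monExp (Nat.factorial ℓ) (m + m' - ℓ)) 1 := by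
        rw [hS, Finset.sum_mul]
        refine Finset.sum_congr rfl fun ℓ hℓ => ?_
        rw [mul_assoc, ← pow_add]
        have he : m' - ℓ + m = m + m' - ℓ := by
          have := (Finset.mem_Icc.mp hℓ).2; omega
        rw [he, X0X1pow]
      have h2 : S m * (X 1 : MvPowerSeries (Fin 2) ℂ) ^ m'
          = ∑ ℓ ∈ Finset.Icc 1 m, monomial (monExp (Nat.factorial ℓ) (m + m' - ℓ)) 1 := by
        rw [hS, Finset.sum_mul]
        refine Finset.sum_congr rfl fun ℓ hℓ => ?_
        rw [mul_assoc, ← pow_add]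
        have he : m - ℓ + m' = m + m' - ℓ := by
          have := (Finset.mem_Icc.mp hℓ).2; omega
        rw [he, X0X1pow]
      rw [h1, h2, show Finset.Icc 1 m' = Finset.Ioc 0 m' from Finset.Icc_add_one_left_eq_Ioc 0 m',
        show Finset.Icc 1 m = Finset.Ioc 0 m from Finset.Icc_add_one_left_eq_Ioc 0 m,
        ← Finset.Ioc_union_Ioc_eq_Ioc (Nat.zero_le m) hmm',
        Finset.sum_union (Finset.disjoint_left.mpr fun x hx hx' => by
          simp only [Finset.mem_Ioc] at hx hx'; omega),
        add_sub_cancel_left]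
    rw [key]
    apply MvPowerSeries.le_order
    intro d hd
    rw [map_sum]
    refine Finset.sum_eq_zero fun ℓ hℓ => ?_
    rw [MvPowerSeries.coeff_monomial, if_neg]
    intro hdd
    obtain ⟨hmℓ, hℓm'⟩ := Finset.mem_Ioc.mp hℓ
    have hfac := fact_ge (show N + 2 ≤ ℓ by omega)
    rw [hdd, degree_monExp] at hd
    have hd' : Nat.factorial ℓ + (m + m' - ℓ) < m + m' + N := by exact_mod_cast hd
    omega
  · -- no-limit part
    rintro ⟨f, g, hg, h⟩
    classical
    have hgex : ∃ b : ℕ, ∃ a : ℕ, MvPowerSeries.coeff (monExp a b) g ≠ 0 := by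
      by_contra hc
      push_neg at hc
      apply hg
      refine MvPowerSeries.ext fun d => ?_
      rw [map_zero, eq_monExp d]
      exact hc (d 1) (d 0)
    set b := Nat.find hgex with hbdef
    obtain ⟨a, ha⟩ := Nat.find_spec hgex
    have hmin : ∀ b' a' : ℕ, b' < b → MvPowerSeries.coeff (monExp a' b') g = 0 := by
      intro b' a' hb'
      by_contra hc
      exact Nat.find_min hgex hb' ⟨a', hc⟩
    set ℓ := max a b + 1 with hℓdef
    have haℓ : a < ℓ := by have := le_max_left a b; omega
    have hbℓ : b < ℓ := by have := le_max_right a b; omega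
    have hℓfac : 1 ≤ Nat.factorial ℓ := Nat.one_le_iff_ne_zero.mpr (Nat.factorial_ne_zero ℓ)
    obtain ⟨M, hM⟩ := h (a + b + Nat.factorial ℓ)
    set m := max M ℓ with hmdef
    have hℓm : ℓ ≤ m := le_max_right _ _
    specialize hM m (le_max_left _ _)
    have hcoeff : MvPowerSeries.coeff (monExp (a + Nat.factorial ℓ) (b + (m - ℓ)))
        (f * (X 1) ^ m - g * S m) = - MvPowerSeries.coeff (monExp a b) g := by
      rw [map_sub]
      have hA : MvPowerSeries.coeff (monExp (a + Nat.factorial ℓ) (b + (m - ℓ)))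
          (f * (X 1 : MvPowerSeries (Fin 2) ℂ) ^ m) = 0 := by
        rw [X_pow_eq, MvPowerSeries.coeff_mul_monomial, if_neg]
        rw [Finsupp.single_le_iff, monExp_apply1]
        omega
      have hB : MvPowerSeries.coeff (monExp (a + Nat.factorial ℓ) (b + (m - ℓ))) (g * S m)
          = MvPowerSeries.coeff (monExp a b) g := by
        rw [hS, Finset.mul_sum, map_sum,
          Finset.sum_eq_single_of_mem ℓ (Finset.mem_Icc.mpr ⟨by omega, hℓm⟩)]
        · rw [X0X1pow, MvPowerSeries.coeff_mul_monomial,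
            if_pos (monExp_le_iff.mpr ⟨by omega, by omega⟩), monExp_sub, mul_one]
          have e1 : a + Nat.factorial ℓ - Nat.factorial ℓ = a := by omega
          have e2 : b + (m - ℓ) - (m - ℓ) = b := by omega
          rw [e1, e2]
        · intro ℓ' hℓ' hne
          rw [X0X1pow, MvPowerSeries.coeff_mul_monomial]
          obtain ⟨h1ℓ', hℓ'm⟩ := Finset.mem_Icc.mp hℓ'
          rcases lt_or_gt_of_ne hne with hlt | hgt
          · -- ℓ' < ℓ : by minimality of b
            split_ifs with hle
            · rw [monExp_sub, mul_one]
              apply hmin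
              have h2 := (monExp_le_iff.mp hle).2
              omega
            · rfl
          · -- ℓ' > ℓ : first exponent too big
            rw [if_neg]
            intro hle
            have h1 := (monExp_le_iff.mp hle).1
            have key : Nat.factorial ℓ + a < Nat.factorial ℓ' := by
              calc Nat.factorial ℓ + a < Nat.factorial ℓ + ℓ := by omega
                _ ≤ Nat.factorial ℓ + ℓ * Nat.factorial ℓ :=
                  Nat.add_le_add_left (Nat.le_mul_of_pos_right ℓ (Nat.factorial_pos ℓ)) _
                _ = (ℓ + 1) * Nat.factorial ℓ := by ring
                _ = Nat.factorial (ℓ + 1) := (Nat.factorial_succ ℓ).symm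
                _ ≤ Nat.factorial ℓ' := Nat.factorial_le hgt
            omega
      rw [hA, hB, zero_sub]
    have hne : MvPowerSeries.coeff (monExp (a + Nat.factorial ℓ) (b + (m - ℓ)))
        (f * (X 1) ^ m - g * S m) ≠ 0 := by
      rw [hcoeff]; simpa using ha
    have hord := MvPowerSeries.order_le hne
    rw [degree_monExp] at hord
    have h0 : ((m + (a + b + Nat.factorial ℓ) : ℕ) : ℕ∞)
        ≤ ((a + Nat.factorial ℓ + (b + (m - ℓ)) : ℕ) : ℕ∞) :=
      le_trans le_add_self (le_trans hM hord)
    rw [Nat.cast_le] at h0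
    omega
end
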